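/- arXiv:1210.0206 — 8 statements merged into one kernel-verified Lean document; each statement's English description precedes it below -/
import Mathlib

section
/- Let v₁,…,v_{n+1} be vectors in ℝ^n generating a full-dimensional pointed polyhedral cone, so that up to scalar there is a unique nontrivial linear dependency 0 = Σ α_i v_i. Then the cone is non-decomposable if and only if α_i ≠ 0 for all i. -/
open Matrix

noncomputable section

variable {n p : ℕ}

/-- The polyhedral cone generated by the vectors `v i`. -/
def coneOf (v : Fin p → (Fin n → ℝ)) : Set (Fin n → ℝ) :=
  {x | ∃ c : Fin p → ℝ, (∀ i, 0 ≤ c i) ∧ x = ∑ i, c i • v i}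

/-- The cone contains no nontrivial linear subspace. -/
def IsPointedCone (v : Fin p → (Fin n → ℝ)) : Prop :=
  ∀ x ∈ coneOf v, -x ∈ coneOf v → x = 0

/-- The generators span the ambient space. -/
def FullDim (v : Fin p → (Fin n → ℝ)) : Prop :=
  Submodule.span ℝ (Set.range v) = ⊤

/-- `v i` generates an extreme ray of the cone. -/
def IsExtremeRayGen (v : Fin p → (Fin n → ℝ)) (i : Fin p) : Prop :=
  v i ≠ 0 ∧ ∀ x ∈ coneOf v, ∀ y ∈ coneOf v, x + y = v i → ∃ a : ℝ, 0 ≤ a ∧ x = a • v i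

/-- `v` is a family of generators of the pairwise distinct extreme rays of a
full-dimensional pointed polyhedral cone. -/
def GoodCone (v : Fin p → (Fin n → ℝ)) : Prop :=
  FullDim v ∧ IsPointedCone v ∧ (∀ i, IsExtremeRayGen v i) ∧
    ∀ i j, i ≠ j → ∀ c : ℝ, 0 < c → v i ≠ c • v j

/-- The cone is decomposable: the space splits as a direct sum with every
generator lying in one of the two factors. -/
def Decomposable (v : Fin p → (Fin n → ℝ)) : Prop :=
  ∃ V₁ V₂ : Submodule ℝ (Fin n → ℝ), V₁ ≠ ⊥ ∧ V₂ ≠ ⊥ ∧ IsCompl V₁ V₂ ∧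
    ∀ i, v i ∈ V₁ ∨ v i ∈ V₂

/-- The component of the cone inside the subspace `W` is decomposable. -/
def DecomposableWithin (W : Submodule ℝ (Fin n → ℝ)) (v : Fin p → (Fin n → ℝ)) : Prop :=
  ∃ W₁ W₂ : Submodule ℝ (Fin n → ℝ), W₁ ≠ ⊥ ∧ W₂ ≠ ⊥ ∧ W₁ ⊔ W₂ = W ∧ W₁ ⊓ W₂ = ⊥ ∧
    ∀ i, v i ∈ W → (v i ∈ W₁ ∨ v i ∈ W₂)

/-- Projective equivalence of two cones given by generators: an invertible
linear map sends the extreme rays of one bijectively onto those of the other. -/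
def ProjEquiv (v w : Fin p → (Fin n → ℝ)) : Prop :=
  ∃ A : (Fin n → ℝ) ≃ₗ[ℝ] (Fin n → ℝ), ∃ σ : Equiv.Perm (Fin p), ∃ lam : Fin p → ℝ,
    (∀ i, 0 < lam i) ∧ ∀ i, A (v i) = lam i • w (σ i)

/-- `A ∈ GL(C)`: an invertible matrix mapping the cone onto itself. -/
def PreservesCone (A : Matrix (Fin n) (Fin n) ℝ) (v : Fin p → (Fin n → ℝ)) : Prop :=
  IsUnit A.det ∧ (fun x => A *ᵥ x) '' coneOf v = coneOf v

/-- `A` maps the ray `ℝ₊ v i` onto the ray `ℝ₊ v (σ i)` for every `i`. -/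
def MapsRays (A : Matrix (Fin n) (Fin n) ℝ) (v : Fin p → (Fin n → ℝ))
    (σ : Equiv.Perm (Fin p)) : Prop :=
  ∀ i, ∃ c : ℝ, 0 < c ∧ A *ᵥ v i = c • v (σ i)

/-- `σ ∈ Proj(C)`: the permutation of extreme rays is induced by some `A ∈ GL(C)`. -/
def ProjSym (v : Fin p → (Fin n → ℝ)) (σ : Equiv.Perm (Fin p)) : Prop :=
  ∃ A : Matrix (Fin n) (Fin n) ℝ, PreservesCone A v ∧ MapsRays A v σ

/-- `F` is a face of the cone: intersection with a supporting hyperplane. -/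
def IsFace (v : Fin p → (Fin n → ℝ)) (F : Set (Fin n → ℝ)) : Prop :=
  ∃ a : Fin n → ℝ, (∀ x ∈ coneOf v, 0 ≤ a ⬝ᵥ x) ∧ F = {x ∈ coneOf v | a ⬝ᵥ x = 0}

/-- The extreme-ray index sets of the `k`-dimensional faces. -/
def faceIdxSets (v : Fin p → (Fin n → ℝ)) (k : ℕ) : Set (Set (Fin p)) :=
  {S | ∃ F : Set (Fin n → ℝ), IsFace v F ∧
    Module.finrank ℝ (Submodule.span ℝ F) = k ∧ S = {i | v i ∈ F}}

/-- `σ` preserves the family of (ray index sets of) `k`-dimensional faces. -/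
def PreservesFaces (v : Fin p → (Fin n → ℝ)) (σ : Equiv.Perm (Fin p)) (k : ℕ) : Prop :=
  ∀ S ∈ faceIdxSets v k, (⇑σ) '' S ∈ faceIdxSets v k

/-- `σ ∈ Skel_k(C)`: preserves all faces of dimension at most `k`. -/
def SkelMem (v : Fin p → (Fin n → ℝ)) (k : ℕ) (σ : Equiv.Perm (Fin p)) : Prop :=
  ∀ l, l ≤ k → PreservesFaces v σ l

/-- `σ ∈ Comb(C)`: preserves the faces of all dimensions `0 ≤ k ≤ n-1`. -/
def CombMem (v : Fin p → (Fin n → ℝ)) (σ : Equiv.Perm (Fin p)) : Prop :=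
  ∀ l, l ≤ n - 1 → PreservesFaces v σ l

/-- `σ ∈ Lin_v(C)`: realized exactly on generators by an invertible matrix. -/
def LinMem (v : Fin p → (Fin n → ℝ)) (σ : Equiv.Perm (Fin p)) : Prop :=
  ∃ A : Matrix (Fin n) (Fin n) ℝ, IsUnit A.det ∧ ∀ i, A *ᵥ v i = v (σ i)

/-- With the unique (up to scalar) dependency 0 = ∑ αᵢ vᵢ among the
n+1 generators, the cone is non-decomposable iff all αᵢ ≠ 0. -/
theorem stmt_2 (n : ℕ) (v : Fin (n + 1) → (Fin n → ℝ)) (hv : GoodCone v)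
    (α : Fin (n + 1) → ℝ) (hdep : ∑ i, α i • v i = 0) (hα : α ≠ 0)
    (huniq : ∀ β : Fin (n + 1) → ℝ, ∑ i, β i • v i = 0 → ∃ c : ℝ, β = c • α) :
    ¬ Decomposable v ↔ ∀ i, α i ≠ 0 := by
  classical
  obtain ⟨hfull, hpt, hray, hdist⟩ := hv
  constructor
  · -- non-decomposable → all α i ≠ 0
    intro hnd
    by_contra h
    push_neg at h
    obtain ⟨j, hj⟩ := h
    apply hnd
    obtain ⟨i₀, hi₀⟩ : ∃ i, α i ≠ 0 := by
      by_contra h'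
      push_neg at h'
      exact hα (funext h')
    set S : Finset (Fin (n + 1)) := Finset.univ.filter (fun i => α i ≠ 0) with hS
    set T : Finset (Fin (n + 1)) := Finset.univ.filter (fun i => α i = 0) with hT
    have hi₀S : i₀ ∈ S := by simp [hS, hi₀]
    have hjT : j ∈ T := by simp [hT, hj]
    have hTc : T = Sᶜ := by
      ext i
      by_cases h : α i = 0 <;> simp [hS, hT, h]
    have hcard : S.card + T.card = n + 1 := by
      rw [hTc, Finset.card_compl]
      have h1 : 1 ≤ S.card := Finset.card_pos.mpr ⟨i₀, hi₀S⟩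
      have h2 : S.card ≤ Fintype.card (Fin (n + 1)) := S.card_le_univ
      simp only [Fintype.card_fin] at h2 ⊢
      omega
    refine ⟨Submodule.span ℝ (v '' ↑S), Submodule.span ℝ (v '' ↑T), ?_, ?_, ?_, ?_⟩
    · -- V₁ ≠ ⊥
      refine Submodule.ne_bot_iff _ |>.mpr ⟨v i₀, Submodule.subset_span ⟨i₀, by simpa using hi₀S, rfl⟩,
        (hray i₀).1⟩
    · -- V₂ ≠ ⊥
      refine Submodule.ne_bot_iff _ |>.mpr ⟨v j, Submodule.subset_span ⟨j, by simpa using hjT, rfl⟩,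
        (hray j).1⟩
    · -- IsCompl
      have hsup : Submodule.span ℝ (v '' ↑S) ⊔ Submodule.span ℝ (v '' ↑T) = ⊤ := by
        rw [← Submodule.span_union, ← Set.image_union]
        have : (↑S ∪ ↑T : Set (Fin (n + 1))) = Set.univ := by
          ext i
          by_cases h : α i = 0 <;> simp [hS, hT, h]
        rw [this, Set.image_univ]
        exact hfull
      -- the relation among the S-vectors
      have hrelS : ∑ i ∈ S, α i • v i = 0 := by
        rw [← hdep]
        refine Finset.sum_subset (Finset.subset_univ S) (fun x _ hx => ?_)
        have : α x = 0 := by simpa [hS] using hx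
        simp [this]
      -- v i₀ is in the span of the other S-vectors
      have hv0 : v i₀ ∈ Submodule.span ℝ (v '' ↑(S.erase i₀)) := by
        have hsum : α i₀ • v i₀ + ∑ i ∈ S.erase i₀, α i • v i = 0 := by
          have h' := Finset.add_sum_erase S (fun i => α i • v i) hi₀S
          rw [h']; exact hrelS
        have hmem : α i₀ • v i₀ ∈ Submodule.span ℝ (v '' ↑(S.erase i₀)) := by
          have : α i₀ • v i₀ = -∑ i ∈ S.erase i₀, α i • v i := by
            linear_combination (norm := module) hsum
          rw [this]
          refine neg_mem (Submodule.sum_mem _ fun i hi => Submodule.smul_mem _ _ ?_)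
          exact Submodule.subset_span ⟨i, Finset.mem_coe.mpr hi, rfl⟩
        have := Submodule.smul_mem _ (α i₀)⁻¹ hmem
        rwa [inv_smul_smul₀ hi₀] at this
      have hle : Submodule.span ℝ (v '' ↑S) ≤ Submodule.span ℝ (v '' ↑(S.erase i₀)) := by
        rw [Submodule.span_le]
        rintro x ⟨i, hi, rfl⟩
        by_cases h : i = i₀
        · subst h; exact hv0
        · exact Submodule.subset_span
            ⟨i, Finset.mem_coe.mpr (Finset.mem_erase.mpr ⟨h, Finset.mem_coe.mp hi⟩), rfl⟩
      have hr1 : Module.finrank ℝ (Submodule.span ℝ (v '' ↑S)) ≤ S.card - 1 := by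
        calc Module.finrank ℝ (Submodule.span ℝ (v '' ↑S))
            ≤ Module.finrank ℝ (Submodule.span ℝ (v '' ↑(S.erase i₀))) :=
              Submodule.finrank_mono hle
          _ ≤ ((S.erase i₀).image v).card := by
              rw [← Finset.coe_image]; exact finrank_span_finset_le_card _
          _ ≤ (S.erase i₀).card := Finset.card_image_le
          _ = S.card - 1 := Finset.card_erase_of_mem hi₀S
      have hr2 : Module.finrank ℝ (Submodule.span ℝ (v '' ↑T)) ≤ T.card := by
        calc Module.finrank ℝ (Submodule.span ℝ (v '' ↑T))
            ≤ (T.image v).card := by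
              rw [← Finset.coe_image]; exact finrank_span_finset_le_card _
          _ ≤ T.card := Finset.card_image_le
      have hfr := Submodule.finrank_sup_add_finrank_inf_eq
        (Submodule.span ℝ (v '' ↑S)) (Submodule.span ℝ (v '' ↑T))
      rw [hsup] at hfr
      have htop : Module.finrank ℝ (⊤ : Submodule ℝ (Fin n → ℝ)) = n := by
        rw [finrank_top]; exact Module.finrank_fin_fun ℝ
      rw [htop] at hfr
      have h1 : 1 ≤ S.card := Finset.card_pos.mpr ⟨i₀, hi₀S⟩
      have hinf : Module.finrank ℝ
          ↥(Submodule.span ℝ (v '' ↑S) ⊓ Submodule.span ℝ (v '' ↑T)) = 0 := by omega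
      exact IsCompl.of_eq (Submodule.finrank_eq_zero.mp hinf) hsup
    · -- each generator lies in one factor
      intro i
      by_cases h : α i = 0
      · exact Or.inr (Submodule.subset_span ⟨i, by simp [hT, h], rfl⟩)
      · exact Or.inl (Submodule.subset_span ⟨i, by simp [hS, h], rfl⟩)
  · -- all α i ≠ 0 → non-decomposable
    rintro hall ⟨V₁, V₂, h1, h2, hc, hmem⟩
    set β : Fin (n + 1) → ℝ := fun i => if v i ∈ V₁ then α i else 0 with hβ
    have hx1 : ∑ i, β i • v i ∈ V₁ := by
      refine Submodule.sum_mem _ fun i _ => ?_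
      by_cases h : v i ∈ V₁
      · simp only [hβ, if_pos h]; exact Submodule.smul_mem _ _ h
      · simp [hβ, if_neg h]
    have hx2 : ∑ i, (α i - β i) • v i ∈ V₂ := by
      refine Submodule.sum_mem _ fun i _ => ?_
      by_cases h : v i ∈ V₁
      · simp [hβ, if_pos h]
      · simp only [hβ, if_neg h, sub_zero]
        exact Submodule.smul_mem _ _ ((hmem i).resolve_left h)
    have hadd : ∑ i, β i • v i + ∑ i, (α i - β i) • v i = 0 := by
      rw [← Finset.sum_add_distrib, ← hdep]
      exact Finset.sum_congr rfl fun i _ => by module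
    have hx10 : ∑ i, β i • v i = 0 := by
      refine Submodule.disjoint_def.mp hc.disjoint _ hx1 ?_
      have : ∑ i, β i • v i = -∑ i, (α i - β i) • v i := by
        linear_combination (norm := module) hadd
      rw [this]
      exact neg_mem hx2
    obtain ⟨c, hcβ⟩ := huniq β hx10
    -- some generator lies in V₁
    have hA : ∃ i, v i ∈ V₁ := by
      by_contra h'
      push_neg at h'
      have : Set.range v ⊆ (V₂ : Set (Fin n → ℝ)) := by
        rintro x ⟨i, rfl⟩
        exact (hmem i).resolve_left (h' i)
      have hV2 : V₂ = ⊤ := eq_top_iff.mpr (hfull ▸ Submodule.span_le.mpr this)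
      exact h1 (disjoint_top.mp (hV2 ▸ hc.disjoint))
    -- some generator does not lie in V₁
    have hB : ∃ i, v i ∉ V₁ := by
      by_contra h'
      push_neg at h'
      have : Set.range v ⊆ (V₁ : Set (Fin n → ℝ)) := by
        rintro x ⟨i, rfl⟩
        exact h' i
      have hV1 : V₁ = ⊤ := eq_top_iff.mpr (hfull ▸ Submodule.span_le.mpr this)
      exact h2 (disjoint_top.mp (hV1 ▸ hc.disjoint).symm)
    obtain ⟨i₁, hi₁⟩ := hA
    obtain ⟨i₂, hi₂⟩ := hB
    have hc0 : c = 0 := by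
      have : β i₂ = c * α i₂ := by rw [hcβ]; rfl
      rw [hβ] at this
      simp only [if_neg hi₂] at this
      exact (mul_eq_zero.mp this.symm).resolve_right (hall i₂)
    have : β i₁ = 0 := by rw [hcβ, hc0]; simp
    rw [hβ] at this
    simp only [if_pos hi₁] at this
    exact hall i₁ this
end
end

section
/- Let v₁,…,v_p span ℝ^n and Q = Σ v_i v_iᵀ. If a permutation σ of {1,…,p} satisfies v_iᵀ Q⁻¹ v_j = v_{σ(i)}ᵀ Q⁻¹ v_{σ(j)} for all i, j, then there exists A ∈ GL_n(ℝ) with A v_i = v_{σ(i)} for all i. -/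
open Matrix

noncomputable section

variable {n p : ℕ}

private lemma sum_mulVec' {m q : ℕ} (M : Fin q → Matrix (Fin m) (Fin m) ℝ) (x : Fin m → ℝ) :
    (∑ i, M i) *ᵥ x = ∑ i, (M i) *ᵥ x := by
  ext k
  simp only [mulVec, dotProduct, Finset.sum_apply, Matrix.sum_apply, Finset.sum_mul]
  rw [Finset.sum_comm]

private lemma dotProduct_sum' {m q : ℕ} (x : Fin m → ℝ) (f : Fin q → (Fin m → ℝ)) :
    x ⬝ᵥ (∑ i, f i) = ∑ i, x ⬝ᵥ f i := by
  simp only [dotProduct, Finset.sum_apply, Finset.mul_sum]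
  rw [Finset.sum_comm]

private lemma vecMulVec_mulVec' {m : ℕ} (w u x : Fin m → ℝ) :
    (vecMulVec w u) *ᵥ x = (u ⬝ᵥ x) • w := by
  ext k
  simp [vecMulVec, mulVec, dotProduct, Finset.sum_mul, Finset.mul_sum]
  congr 1; ext j; ring

/-- If the colors vᵢᵀ Q⁻¹ vⱼ are σ-invariant, then σ is realized by
an invertible matrix A with A vᵢ = v_{σ(i)}. -/
theorem stmt_7 (n p : ℕ) (v : Fin p → (Fin n → ℝ))
    (hspan : Submodule.span ℝ (Set.range v) = ⊤)
    (Q : Matrix (Fin n) (Fin n) ℝ) (hQ : Q = ∑ i, vecMulVec (v i) (v i))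
    (σ : Equiv.Perm (Fin p))
    (hcol : ∀ i j, v i ⬝ᵥ (Q⁻¹ *ᵥ v j) = v (σ i) ⬝ᵥ (Q⁻¹ *ᵥ v (σ j))) :
    ∃ A : Matrix (Fin n) (Fin n) ℝ, IsUnit A.det ∧ ∀ i, A *ᵥ v i = v (σ i) := by
  -- Q *ᵥ x expansion
  have hQmul : ∀ x : Fin n → ℝ, Q *ᵥ x = ∑ i, (v i ⬝ᵥ x) • v i := by
    intro x
    rw [hQ, sum_mulVec' _ _]
    exact Finset.sum_congr rfl fun i _ => vecMulVec_mulVec' _ _ _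
  -- Q has nonzero determinant
  have hdet : Q.det ≠ 0 := by
    intro h0
    obtain ⟨x, hx, hQx⟩ := (Matrix.exists_mulVec_eq_zero_iff).2 h0
    have hquad : x ⬝ᵥ (Q *ᵥ x) = ∑ i, (v i ⬝ᵥ x) ^ 2 := by
      rw [hQmul, dotProduct_sum' _ _]
      exact Finset.sum_congr rfl fun i _ => by
        rw [dotProduct_smul, smul_eq_mul, dotProduct_comm]; ring
    have hz : ∀ i, v i ⬝ᵥ x = 0 := by
      have hs : ∑ i, (v i ⬝ᵥ x) ^ 2 = 0 := by rw [← hquad, hQx, dotProduct_zero]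
      intro i
      have := (Finset.sum_eq_zero_iff_of_nonneg (fun i _ => sq_nonneg (v i ⬝ᵥ x))).1 hs i
        (Finset.mem_univ i)
      exact pow_eq_zero_iff (by norm_num) |>.1 this
    have hker : ∀ y : Fin n → ℝ, y ⬝ᵥ x = 0 := by
      intro y
      let f : (Fin n → ℝ) →ₗ[ℝ] ℝ :=
        { toFun := fun y => y ⬝ᵥ x
          map_add' := fun a b => add_dotProduct a b x
          map_smul' := fun c a => smul_dotProduct c a x }
      have hle : Submodule.span ℝ (Set.range v) ≤ LinearMap.ker f := by
        rw [Submodule.span_le]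
        rintro _ ⟨i, rfl⟩
        exact hz i
      rw [hspan] at hle
      exact hle (Submodule.mem_top : y ∈ ⊤)
    exact hx (dotProduct_self_eq_zero.1 (hker x))
  have hQQ : Q * Q⁻¹ = 1 := Matrix.mul_nonsing_inv Q (isUnit_iff_ne_zero.2 hdet)
  set A : Matrix (Fin n) (Fin n) ℝ := ∑ i, vecMulVec (v (σ i)) (Q⁻¹ᵀ *ᵥ v i) with hA
  have key : ∀ j, A *ᵥ v j = v (σ j) := by
    intro j
    rw [hA, sum_mulVec' _ _]
    have step : ∀ i, (vecMulVec (v (σ i)) (Q⁻¹ᵀ *ᵥ v i)) *ᵥ v j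
        = (v (σ i) ⬝ᵥ (Q⁻¹ *ᵥ v (σ j))) • v (σ i) := by
      intro i
      rw [vecMulVec_mulVec']
      congr 1
      rw [Matrix.mulVec_transpose, ← Matrix.dotProduct_mulVec]
      exact hcol i j
    calc ∑ i, (vecMulVec (v (σ i)) (Q⁻¹ᵀ *ᵥ v i)) *ᵥ v j
        = ∑ i, (v (σ i) ⬝ᵥ (Q⁻¹ *ᵥ v (σ j))) • v (σ i) :=
          Finset.sum_congr rfl fun i _ => step i
      _ = ∑ i, (v i ⬝ᵥ (Q⁻¹ *ᵥ v (σ j))) • v i := Equiv.sum_comp σ fun k => (v k ⬝ᵥ (Q⁻¹ *ᵥ v (σ j))) • v k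
      _ = Q *ᵥ (Q⁻¹ *ᵥ v (σ j)) := (hQmul _).symm
      _ = v (σ j) := by rw [Matrix.mulVec_mulVec, hQQ, Matrix.one_mulVec]
  refine ⟨A, ?_, key⟩
  -- A is invertible since it maps a spanning set onto a spanning set
  have hsurj : Function.Surjective A.mulVecLin := by
    rw [← LinearMap.range_eq_top]
    rw [eq_top_iff, ← hspan, Submodule.span_le]
    rintro _ ⟨j, rfl⟩
    exact ⟨v (σ⁻¹ j), by rw [Matrix.mulVecLin_apply, key]; simp⟩
  have hinj : Function.Injective A.mulVecLin :=
    (LinearMap.injective_iff_surjective).2 hsurj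
  rw [isUnit_iff_ne_zero]
  intro h0
  obtain ⟨x, hx, hAx⟩ := (Matrix.exists_mulVec_eq_zero_iff).2 h0
  exact hx (hinj (show A.mulVecLin x = A.mulVecLin 0 by
    simp [Matrix.mulVecLin_apply, hAx]))
end
end

section
/- Let C be a pointed full-dimensional polyhedral cone in ℝ^n with extreme rays R₁,…,R_p. There exists a unique decomposition ℝ^n = ⨁_{k=1}^h V_k into subspaces such that every extreme ray lies in some V_k, and the cone generated by the extreme rays lying in V_k is non-decomposable for each k. -/
open Matrix

noncomputable section

variable {n p : ℕ}

namespace Stmt9Aux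

/-- A decomposition of the ambient space adapted to the generators `v`. -/
def IsDecomp (v : Fin p → (Fin n → ℝ)) (𝒱 : Set (Submodule ℝ (Fin n → ℝ))) : Prop :=
  𝒱.Finite ∧ ⊥ ∉ 𝒱 ∧ sSupIndep 𝒱 ∧ sSup 𝒱 = ⊤ ∧ (∀ i, ∃ W ∈ 𝒱, v i ∈ W)

/-- The span of the generators lying in `W`. -/
def genSpan (v : Fin p → (Fin n → ℝ)) (W : Submodule ℝ (Fin n → ℝ)) :
    Submodule ℝ (Fin n → ℝ) :=
  Submodule.span ℝ {x | (∃ i, v i = x) ∧ x ∈ W}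

lemma genSpan_le (v : Fin p → (Fin n → ℝ)) (W : Submodule ℝ (Fin n → ℝ)) :
    genSpan v W ≤ W :=
  Submodule.span_le.mpr fun _ hx => hx.2

lemma card_le {v : Fin p → (Fin n → ℝ)} {𝒱 : Set (Submodule ℝ (Fin n → ℝ))}
    (h : IsDecomp v 𝒱) : 𝒱.ncard ≤ n := by
  obtain ⟨hfin, hbot, hind, -, -⟩ := h
  haveI : Fintype 𝒱 := hfin.fintype
  choose w hw hw0 using fun W : 𝒱 =>
    Submodule.exists_mem_ne_zero_of_ne_bot (p := W.1) (fun hW => hbot (hW ▸ W.2))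
  have hli : LinearIndependent ℝ w :=
    ((sSupIndep_iff 𝒱).mp hind).linearIndependent _ hw hw0
  have hc := hli.fintype_card_le_finrank
  rw [Module.finrank_fin_fun] at hc
  rwa [Set.ncard_eq_toFinset_card', Set.toFinset_card]

lemma spanned {v : Fin p → (Fin n → ℝ)} {𝒱 : Set (Submodule ℝ (Fin n → ℝ))}
    (h : IsDecomp v 𝒱) (hfd : FullDim v) {W : Submodule ℝ (Fin n → ℝ)} (hW : W ∈ 𝒱) :
    genSpan v W = W := by
  obtain ⟨hfin, hbot, hind, htop, hgen⟩ := h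
  set D := sSup (𝒱 \ {W}) with hD
  have hWD : Disjoint W D := hind hW
  have htop' : genSpan v W ⊔ D = ⊤ := by
    rw [eq_top_iff, ← hfd]
    apply Submodule.span_le.mpr
    rintro x ⟨i, rfl⟩
    obtain ⟨W', hW', hv'⟩ := hgen i
    by_cases hWW : W' = W
    · exact Submodule.mem_sup_left (Submodule.subset_span ⟨⟨i, rfl⟩, hWW ▸ hv'⟩)
    · exact Submodule.mem_sup_right
        ((le_sSup (show W' ∈ 𝒱 \ {W} from ⟨hW', by simpa using hWW⟩)) hv')
  have hmod : (genSpan v W ⊔ D) ⊓ W = genSpan v W ⊔ D ⊓ W :=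
    sup_inf_assoc_of_le D (genSpan_le v W)
  rw [htop', top_inf_eq, disjoint_iff.mp hWD.symm, sup_bot_eq] at hmod
  exact hmod.symm

lemma split {v : Fin p → (Fin n → ℝ)} {𝒱 : Set (Submodule ℝ (Fin n → ℝ))}
    {W W₁ W₂ : Submodule ℝ (Fin n → ℝ)} (h : IsDecomp v 𝒱) (hW : W ∈ 𝒱)
    (h1 : W₁ ≠ ⊥) (h2 : W₂ ≠ ⊥) (hsup : W₁ ⊔ W₂ = W) (hinf : W₁ ⊓ W₂ = ⊥)
    (hcov : ∀ i, v i ∈ W → v i ∈ W₁ ∨ v i ∈ W₂) :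
    IsDecomp v (insert W₁ (insert W₂ (𝒱 \ {W}))) ∧
      (insert W₁ (insert W₂ (𝒱 \ {W}))).ncard = 𝒱.ncard + 1 := by
  obtain ⟨hfin, hbot, hind, htop, hgen⟩ := h
  have hd12 : Disjoint W₁ W₂ := disjoint_iff.mpr hinf
  have h1W : W₁ ≤ W := hsup ▸ le_sup_left
  have h2W : W₂ ≤ W := hsup ▸ le_sup_right
  have h12 : W₁ ≠ W₂ := by
    rintro rfl
    exact h1 (by simpa using hinf)
  have hn1 : W₁ ∉ 𝒱 := by
    intro hU
    rcases eq_or_ne W₁ W with hEq | hne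
    · apply h2
      have : W₂ ≤ W₁ ⊓ W₂ := le_inf (hEq ▸ h2W) le_rfl
      rw [hinf] at this
      exact le_bot_iff.mp this
    · have hd : Disjoint W₁ W := hind.pairwiseDisjoint hU hW hne
      exact h1 (hd.eq_bot_of_le h1W)
  have hn2 : W₂ ∉ 𝒱 := by
    intro hU
    rcases eq_or_ne W₂ W with hEq | hne
    · apply h1
      have : W₁ ≤ W₁ ⊓ W₂ := le_inf le_rfl (hEq ▸ h1W)
      rw [hinf] at this
      exact le_bot_iff.mp this
    · have hd : Disjoint W₂ W := hind.pairwiseDisjoint hU hW hne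
      exact h2 (hd.eq_bot_of_le h2W)
  set s' := 𝒱 \ {W} with hs'
  have hfin' : s'.Finite := hfin.diff
  have hDW : Disjoint W (sSup s') := hind hW
  have hsup' : W ⊔ sSup s' = ⊤ := by
    rw [← sSup_insert, Set.insert_diff_singleton, Set.insert_eq_of_mem hW, htop]
  constructor
  · refine ⟨(hfin'.insert W₂).insert W₁, ?_, ?_, ?_, ?_⟩
    · simp only [Set.mem_insert_iff, hs', Set.mem_diff]
      push_neg
      exact ⟨Ne.symm h1, Ne.symm h2, fun hb => absurd hb hbot⟩
    · intro a ha
      rcases Set.mem_insert_iff.mp ha with rfl | ha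
      · have hsub : insert a (insert W₂ s') \ {a} ⊆ insert W₂ s' := by
          rintro x ⟨hx, hx'⟩
          rcases Set.mem_insert_iff.mp hx with rfl | hx
          · exact absurd rfl hx'
          · exact hx
        have hd : Disjoint a (W₂ ⊔ sSup s') :=
          hd12.disjoint_sup_right_of_disjoint_sup_left (hsup ▸ hDW)
        exact hd.mono_right ((sSup_le_sSup hsub).trans (by rw [sSup_insert]))
      rcases Set.mem_insert_iff.mp ha with rfl | ha
      · have hsub : insert W₁ (insert a s') \ {a} ⊆ insert W₁ s' := by
          rintro x ⟨hx, hx'⟩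
          rcases Set.mem_insert_iff.mp hx with rfl | hx
          · exact Set.mem_insert _ _
          rcases Set.mem_insert_iff.mp hx with rfl | hx
          · exact absurd rfl hx'
          · exact Set.mem_insert_of_mem _ hx
        have hd : Disjoint a (W₁ ⊔ sSup s') := by
          refine hd12.symm.disjoint_sup_right_of_disjoint_sup_left ?_
          rw [sup_comm, hsup]; exact hDW
        exact hd.mono_right ((sSup_le_sSup hsub).trans (by rw [sSup_insert]))
      · have haW : a ≠ W := ha.2
        have hsub : insert W₁ (insert W₂ s') \ {a} ⊆ insert W₁ (insert W₂ (s' \ {a})) := by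
          rintro x ⟨hx, hx'⟩
          rcases Set.mem_insert_iff.mp hx with rfl | hx
          · exact Set.mem_insert _ _
          rcases Set.mem_insert_iff.mp hx with rfl | hx
          · exact Set.mem_insert_of_mem _ (Set.mem_insert _ _)
          · exact Set.mem_insert_of_mem _ (Set.mem_insert_of_mem _ ⟨hx, hx'⟩)
        have hle : sSup (insert W₁ (insert W₂ s') \ {a}) ≤ sSup (𝒱 \ {a}) := by
          refine (sSup_le_sSup hsub).trans ?_
          rw [sSup_insert, sSup_insert, ← sup_assoc, hsup]
          refine sup_le (le_sSup ⟨hW, by simpa using (Ne.symm haW)⟩) (sSup_le_sSup ?_)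
          rintro x ⟨⟨hx1, _⟩, hx2⟩
          exact ⟨hx1, hx2⟩
        exact (hind ha.1).mono_right hle
    · rw [sSup_insert, sSup_insert, ← sup_assoc, hsup, hsup']
    · intro i
      obtain ⟨W', hW', hv'⟩ := hgen i
      by_cases hWW : W' = W
      · rcases hcov i (hWW ▸ hv') with hc | hc
        · exact ⟨W₁, Set.mem_insert _ _, hc⟩
        · exact ⟨W₂, Set.mem_insert_of_mem _ (Set.mem_insert _ _), hc⟩
      · exact ⟨W', Set.mem_insert_of_mem _ (Set.mem_insert_of_mem _ ⟨hW', by simpa using hWW⟩), hv'⟩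
  · have e1 : W₂ ∉ s' := fun hmem => hn2 hmem.1
    have e2 : W₁ ∉ insert W₂ s' := by
      intro hmem
      rcases Set.mem_insert_iff.mp hmem with hEq | hmem
      · exact h12 hEq
      · exact hn1 hmem.1
    rw [Set.ncard_insert_of_notMem e2 (hfin'.insert W₂),
      Set.ncard_insert_of_notMem e1 hfin', ← Set.ncard_diff_singleton_add_one hW hfin]

lemma exists_decomp (v : Fin p → (Fin n → ℝ)) (hv : GoodCone v) :
    ∃ 𝒱, IsDecomp v 𝒱 := by
  by_cases hn : (⊤ : Submodule ℝ (Fin n → ℝ)) = ⊥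
  · refine ⟨∅, Set.finite_empty, by simp, sSupIndep_empty, by rw [sSup_empty, hn], fun i => ?_⟩
    have : v i ∈ (⊥ : Submodule ℝ (Fin n → ℝ)) := hn ▸ Submodule.mem_top
    exact ((hv.2.2.1 i).1 ((Submodule.mem_bot ℝ).mp this)).elim

  · refine ⟨{⊤}, Set.finite_singleton _, ?_, sSupIndep_singleton _, by simp,
      fun i => ⟨⊤, rfl, Submodule.mem_top⟩⟩
    simp only [Set.mem_singleton_iff]
    exact fun hb => hn hb.symm

lemma exists_good (v : Fin p → (Fin n → ℝ)) (hv : GoodCone v) :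
    ∃ 𝒱, IsDecomp v 𝒱 ∧ ∀ W ∈ 𝒱, ¬ DecomposableWithin W v := by
  set T : Set ℕ := {m | ∃ 𝒱, IsDecomp v 𝒱 ∧ 𝒱.ncard = m} with hT
  have hne : T.Nonempty := by
    obtain ⟨𝒱, h𝒱⟩ := exists_decomp v hv
    exact ⟨_, 𝒱, h𝒱, rfl⟩
  have hbdd : BddAbove T := ⟨n, by rintro m ⟨𝒱, h𝒱, rfl⟩; exact card_le h𝒱⟩
  obtain ⟨𝒱, h𝒱, hcard⟩ := Nat.sSup_mem hne hbdd
  refine ⟨𝒱, h𝒱, fun W hW hdec => ?_⟩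
  obtain ⟨W₁, W₂, h1, h2, hsup, hinf, hcov⟩ := hdec
  obtain ⟨h', hc'⟩ := split h𝒱 hW h1 h2 hsup hinf hcov
  have hle : 𝒱.ncard + 1 ≤ sSup T := le_csSup hbdd ⟨_, h', hc'⟩
  rw [hcard] at hle
  omega

lemma le_part {v : Fin p → (Fin n → ℝ)} {𝒱 𝒱' : Set (Submodule ℝ (Fin n → ℝ))}
    (hv : GoodCone v) (h : IsDecomp v 𝒱) (h' : IsDecomp v 𝒱')
    (hnd : ∀ W ∈ 𝒱, ¬ DecomposableWithin W v) {W : Submodule ℝ (Fin n → ℝ)} (hW : W ∈ 𝒱) :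
    ∃ W' ∈ 𝒱', W ≤ W' := by
  have hspan : genSpan v W = W := spanned h hv.1 hW
  have hWbot : W ≠ ⊥ := fun hb => h.2.1 (hb ▸ hW)
  have hne : {x | (∃ i, v i = x) ∧ x ∈ W}.Nonempty := by
    by_contra hcon
    rw [Set.not_nonempty_iff_eq_empty] at hcon
    exact hWbot (by rw [← hspan, genSpan, hcon, Submodule.span_empty])
  obtain ⟨x₀, ⟨i₀, rfl⟩, hx₀W⟩ := hne
  obtain ⟨W', hW', hvW'⟩ := h'.2.2.2.2 i₀
  refine ⟨W', hW', ?_⟩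
  by_cases hall : ∀ i, v i ∈ W → v i ∈ W'
  · rw [← hspan]
    exact Submodule.span_le.mpr (by rintro x ⟨⟨i, rfl⟩, hxW⟩; exact hall i hxW)
  · exfalso
    push_neg at hall
    obtain ⟨i₁, hi₁W, hi₁W'⟩ := hall
    apply hnd W hW
    refine ⟨Submodule.span ℝ {x | (∃ i, v i = x) ∧ x ∈ W ∧ x ∈ W'},
            Submodule.span ℝ {x | (∃ i, v i = x) ∧ x ∈ W ∧ x ∉ W'}, ?_, ?_, ?_, ?_, ?_⟩
    · intro hb
      have : v i₀ ∈ (⊥ : Submodule ℝ (Fin n → ℝ)) :=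
        hb ▸ Submodule.subset_span ⟨⟨i₀, rfl⟩, hx₀W, hvW'⟩
      exact (hv.2.2.1 i₀).1 ((Submodule.mem_bot ℝ).mp this)
    · intro hb
      have : v i₁ ∈ (⊥ : Submodule ℝ (Fin n → ℝ)) :=
        hb ▸ Submodule.subset_span ⟨⟨i₁, rfl⟩, hi₁W, hi₁W'⟩
      exact (hv.2.2.1 i₁).1 ((Submodule.mem_bot ℝ).mp this)
    · have hsets : {x | (∃ i, v i = x) ∧ x ∈ W ∧ x ∈ W'} ∪
          {x | (∃ i, v i = x) ∧ x ∈ W ∧ x ∉ W'} = {x | (∃ i, v i = x) ∧ x ∈ W} := by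
        ext x
        constructor
        · rintro (⟨hx1, hx2, _⟩ | ⟨hx1, hx2, _⟩) <;> exact ⟨hx1, hx2⟩
        · rintro ⟨hx1, hx2⟩
          by_cases hc : x ∈ W'
          · exact Or.inl ⟨hx1, hx2, hc⟩
          · exact Or.inr ⟨hx1, hx2, hc⟩
      rw [← Submodule.span_union, hsets]
      exact hspan
    · have hA : Submodule.span ℝ {x | (∃ i, v i = x) ∧ x ∈ W ∧ x ∈ W'} ≤ W' :=
        Submodule.span_le.mpr fun x hx => hx.2.2
      have hB : Submodule.span ℝ {x | (∃ i, v i = x) ∧ x ∈ W ∧ x ∉ W'} ≤ sSup (𝒱' \ {W'}) := by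
        apply Submodule.span_le.mpr
        rintro x ⟨⟨i, rfl⟩, hxW, hxW'⟩
        obtain ⟨W'', hW'', hv''⟩ := h'.2.2.2.2 i
        have hne'' : W'' ≠ W' := fun e => hxW' (e ▸ hv'')
        exact (le_sSup (show W'' ∈ 𝒱' \ {W'} from ⟨hW'', by simpa using hne''⟩)) hv''
      exact disjoint_iff.mp ((h'.2.2.1 hW').mono hA hB)
    · intro i hiW
      by_cases hc : v i ∈ W'
      · exact Or.inl (Submodule.subset_span ⟨⟨i, rfl⟩, hiW, hc⟩)
      · exact Or.inr (Submodule.subset_span ⟨⟨i, rfl⟩, hiW, hc⟩)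

lemma subset_of {v : Fin p → (Fin n → ℝ)} (hv : GoodCone v)
    {𝒱 𝒱' : Set (Submodule ℝ (Fin n → ℝ))} (h : IsDecomp v 𝒱) (h' : IsDecomp v 𝒱')
    (hnd : ∀ W ∈ 𝒱, ¬ DecomposableWithin W v) (hnd' : ∀ W ∈ 𝒱', ¬ DecomposableWithin W v) :
    𝒱 ⊆ 𝒱' := by
  intro W hW
  obtain ⟨W', hW', hle⟩ := le_part hv h h' hnd hW
  obtain ⟨W'', hW'', hle'⟩ := le_part hv h' h hnd' hW'
  have hWW'' : W = W'' := by
    by_contra hne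
    have hd : Disjoint W W'' := h.2.2.1.pairwiseDisjoint hW hW'' hne
    have hWbot : W ≠ ⊥ := fun hb => h.2.1 (hb ▸ hW)
    exact hWbot (hd.eq_bot_of_le (hle.trans hle'))
  have : W = W' := le_antisymm hle (hWW'' ▸ hle')
  exact this ▸ hW'

end Stmt9Aux

/-- Unique decomposition of ℝⁿ into subspaces such that every extreme
ray lies in one of them and each component cone is non-decomposable. -/
theorem stmt_9 (n p : ℕ) (v : Fin p → (Fin n → ℝ)) (hv : GoodCone v) :
    ∃! 𝒱 : Set (Submodule ℝ (Fin n → ℝ)), 𝒱.Finite ∧ ⊥ ∉ 𝒱 ∧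
      sSupIndep 𝒱 ∧ sSup 𝒱 = ⊤ ∧ (∀ i, ∃ W ∈ 𝒱, v i ∈ W) ∧
      ∀ W ∈ 𝒱, ¬ DecomposableWithin W v := by
  obtain ⟨𝒱, h𝒱, hnd⟩ := Stmt9Aux.exists_good v hv
  refine ⟨𝒱, ⟨h𝒱.1, h𝒱.2.1, h𝒱.2.2.1, h𝒱.2.2.2.1, h𝒱.2.2.2.2, hnd⟩, ?_⟩
  rintro 𝒱' ⟨hf, hb, hi, hs, hg, hnd'⟩
  have h' : Stmt9Aux.IsDecomp v 𝒱' := ⟨hf, hb, hi, hs, hg⟩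
  exact subset_antisymm (Stmt9Aux.subset_of hv h' h𝒱 hnd' hnd)
    (Stmt9Aux.subset_of hv h𝒱 h' hnd hnd')
end
end

section
/- Let C be a non-decomposable pointed full-dimensional polyhedral cone in ℝ^n with extreme rays R₁,…,R_p. If A ∈ GL_n(ℝ) satisfies A C = C and A R_i = R_i for every i (i.e., A induces the identity permutation on extreme rays), then A = λ I_n for some λ > 0. -/
open Matrix

noncomputable section

variable {n p : ℕ}

/-- For a non-decomposable cone, an element of GL(C) fixing every
extreme ray is a positive multiple of the identity. -/
theorem stmt_10 (n p : ℕ) (v : Fin p → (Fin n → ℝ)) (hv : GoodCone v)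
    (hnd : ¬ Decomposable v) (A : Matrix (Fin n) (Fin n) ℝ)
    (hA : PreservesCone A v)
    (hrays : ∀ i, ∃ c : ℝ, 0 < c ∧ A *ᵥ v i = c • v i) :
    ∃ lam : ℝ, 0 < lam ∧ A = lam • (1 : Matrix (Fin n) (Fin n) ℝ) := by
  classical
  choose c hc hAc using hrays
  have hvne : ∀ i, v i ≠ 0 := fun i => (hv.2.2.1 i).1
  -- the linear map
  set f : Module.End ℝ (Fin n → ℝ) := A.mulVecLin with hf
  have hmem : ∀ i, v i ∈ Module.End.eigenspace f (c i) := by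
    intro i
    rw [Module.End.mem_eigenspace_iff]
    simpa [f, Matrix.mulVecLin_apply] using hAc i
  rcases Nat.eq_zero_or_pos p with hp | hp
  · -- p = 0 : module is trivial
    subst hp
    have htop : (⊥ : Submodule ℝ (Fin n → ℝ)) = ⊤ := by
      have h1 := hv.1
      unfold FullDim at h1
      rw [Set.range_eq_empty v, Submodule.span_empty] at h1
      exact h1
    have hn : n = 0 := by
      by_contra h
      have hpos : 0 < n := Nat.pos_of_ne_zero h
      have hx : (Pi.single (⟨0, hpos⟩ : Fin n) (1:ℝ)) ∈ (⊥ : Submodule ℝ (Fin n → ℝ)) :=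
        htop ▸ Submodule.mem_top
      rw [Submodule.mem_bot] at hx
      have := congrFun hx ⟨0, hpos⟩
      simp at this
    subst hn
    refine ⟨1, one_pos, ?_⟩
    ext i j
    exact absurd i.2 (by omega)
  · -- p > 0
    set i₀ : Fin p := ⟨0, hp⟩
    have hall : ∀ i, c i = c i₀ := by
      by_contra h
      push_neg at h
      obtain ⟨j₀, hj₀⟩ := h
      -- build decomposition
      set α := c i₀
      set V₁ : Submodule ℝ (Fin n → ℝ) := Submodule.span ℝ (v '' {i | c i = α})
      set V₂ : Submodule ℝ (Fin n → ℝ) := Submodule.span ℝ (v '' {i | c i ≠ α})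
      apply hnd
      have hV1le : V₁ ≤ Module.End.eigenspace f α := by
        apply Submodule.span_le.2
        rintro x ⟨i, hi, rfl⟩
        exact hi ▸ hmem i
      have hV2le : V₂ ≤ ⨆ (β : ℝ) (_ : β ≠ α), Module.End.eigenspace f β := by
        apply Submodule.span_le.2
        rintro x ⟨i, hi, rfl⟩
        have : v i ∈ Module.End.eigenspace f (c i) := hmem i
        exact Submodule.mem_iSup_of_mem (c i) (Submodule.mem_iSup_of_mem hi this)
      have hdisj : Disjoint V₁ V₂ := by
        have hind := Module.End.eigenspaces_iSupIndep f
        exact (hind α).mono hV1le hV2le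
      have hsup : V₁ ⊔ V₂ = ⊤ := by
        rw [eq_top_iff, ← hv.1]
        apply Submodule.span_le.2
        rintro x ⟨i, rfl⟩
        by_cases hiα : c i = α
        · exact Submodule.mem_sup_left (Submodule.subset_span ⟨i, hiα, rfl⟩)
        · exact Submodule.mem_sup_right (Submodule.subset_span ⟨i, hiα, rfl⟩)
      refine ⟨V₁, V₂, ?_, ?_, ⟨hdisj, codisjoint_iff.2 hsup⟩, ?_⟩
      · intro hbot
        exact hvne i₀ (by
          have : v i₀ ∈ V₁ := Submodule.subset_span ⟨i₀, rfl, rfl⟩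
          simpa [hbot] using this)
      · intro hbot
        exact hvne j₀ (by
          have : v j₀ ∈ V₂ := Submodule.subset_span ⟨j₀, hj₀, rfl⟩
          simpa [hbot] using this)
      · intro i
        by_cases hiα : c i = α
        · exact Or.inl (Submodule.subset_span ⟨i, hiα, rfl⟩)
        · exact Or.inr (Submodule.subset_span ⟨i, hiα, rfl⟩)
    refine ⟨c i₀, hc i₀, ?_⟩
    have hax : ∀ x, A *ᵥ x = c i₀ • x := by
      have hspan : ∀ x, x ∈ Submodule.span ℝ (Set.range v) := fun x => hv.1 ▸ Submodule.mem_top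
      intro x
      refine Submodule.span_induction ?_ ?_ ?_ ?_ (hspan x)
      · rintro y ⟨i, rfl⟩
        rw [hAc i, hall i]
      · simp [Matrix.mulVec_zero]
      · intro y z _ _ hy hz
        rw [Matrix.mulVec_add, hy, hz, smul_add]
      · intro a y _ hy
        rw [Matrix.mulVec_smul, hy, smul_comm]
    ext i j
    have := congrFun (hax (Pi.single j 1)) i
    rw [Matrix.mulVec_single_one] at this
    simp only [Matrix.col_apply] at this
    simp [this, Matrix.one_apply, Pi.single_apply]
end
end

section
/- Let C be a non-decomposable pointed full-dimensional polyhedral cone in ℝ^n with extreme rays R₁,…,R_p. Then there exist generators v_i with R_i = ℝ_{≥0} v_i such that every σ ∈ Proj(C) is realized by a matrix A ∈ GL(C) of finite order satisfying A v_i = v_{σ(i)} exactly (with multiplier 1); i.e., Lin_v(C) = Proj(C) for this choice of v. -/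
open Matrix

noncomputable section

variable {n p : ℕ}

/-! ### Auxiliary lemmas -/

section Aux

lemma smul_cancel_ne_zero {x : Fin n → ℝ} (hx : x ≠ 0) {a b : ℝ}
    (h : a • x = b • x) : a = b := by
  have h2 : (a - b) • x = 0 := by rw [sub_smul, h, sub_self]
  rcases smul_eq_zero.mp h2 with h' | h'
  · exact sub_eq_zero.mp h'
  · exact absurd h' hx

lemma coneOf_smul_mem {v : Fin p → (Fin n → ℝ)} {x : Fin n → ℝ}
    (hx : x ∈ coneOf v) {s : ℝ} (hs : 0 ≤ s) : s • x ∈ coneOf v := by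
  obtain ⟨c, hc, rfl⟩ := hx
  refine ⟨fun i => s * c i, fun i => mul_nonneg hs (hc i), ?_⟩
  rw [Finset.smul_sum]
  exact Finset.sum_congr rfl fun i _ => (smul_smul s (c i) (v i))

lemma smul_image_coneOf {v : Fin p → (Fin n → ℝ)} {s : ℝ} (hs : 0 < s) :
    (fun x => s • x) '' coneOf v = coneOf v := by
  ext x
  constructor
  · rintro ⟨y, hy, rfl⟩
    exact coneOf_smul_mem hy hs.le
  · intro hx
    refine ⟨s⁻¹ • x, coneOf_smul_mem hx (by positivity), ?_⟩
    show s • s⁻¹ • x = x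
    rw [smul_smul, mul_inv_cancel₀ hs.ne', one_smul]

lemma preservesCone_smul {A : Matrix (Fin n) (Fin n) ℝ} {v : Fin p → (Fin n → ℝ)}
    (hA : PreservesCone A v) {s : ℝ} (hs : 0 < s) : PreservesCone (s • A) v := by
  obtain ⟨hdet, himg⟩ := hA
  constructor
  · rw [Matrix.det_smul]
    exact (IsUnit.pow _ (isUnit_iff_ne_zero.mpr hs.ne')).mul hdet
  · have : (fun x => (s • A) *ᵥ x) = (fun x => s • x) ∘ (fun x => A *ᵥ x) := by
      funext x; exact Matrix.smul_mulVec s A x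
    rw [this, Set.image_comp, himg, smul_image_coneOf hs]

lemma preservesCone_one {v : Fin p → (Fin n → ℝ)} : PreservesCone (1 : Matrix (Fin n) (Fin n) ℝ) v := by
  constructor
  · simp
  · have : (fun x : Fin n → ℝ => (1 : Matrix (Fin n) (Fin n) ℝ) *ᵥ x) = id := by
      funext x; exact Matrix.one_mulVec x
    rw [this, Set.image_id]

lemma preservesCone_mul {A B : Matrix (Fin n) (Fin n) ℝ} {v : Fin p → (Fin n → ℝ)}
    (hA : PreservesCone A v) (hB : PreservesCone B v) : PreservesCone (A * B) v := by
  obtain ⟨hdA, hiA⟩ := hA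
  obtain ⟨hdB, hiB⟩ := hB
  constructor
  · rw [Matrix.det_mul]; exact hdA.mul hdB
  · have : (fun x => (A * B) *ᵥ x) = (fun x => A *ᵥ x) ∘ (fun x => B *ᵥ x) := by
      funext x; exact (Matrix.mulVec_mulVec x A B).symm
    rw [this, Set.image_comp, hiB, hiA]

lemma preservesCone_inv {A : Matrix (Fin n) (Fin n) ℝ} {v : Fin p → (Fin n → ℝ)}
    (hA : PreservesCone A v) : PreservesCone A⁻¹ v := by
  obtain ⟨hdet, himg⟩ := hA
  refine ⟨Matrix.isUnit_nonsing_inv_det A hdet, ?_⟩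
  conv_lhs => rw [← himg]
  rw [← Set.image_comp]
  have : (fun x => A⁻¹ *ᵥ x) ∘ (fun x => A *ᵥ x) = id := by
    funext x
    simp only [Function.comp_apply, id_eq, Matrix.mulVec_mulVec,
      Matrix.nonsing_inv_mul A hdet, Matrix.one_mulVec]
  rw [this, Set.image_id]

end Aux

section Rigid

/-- Rigidity: a matrix fixing every extreme ray of a non-decomposable cone is a
positive scalar. -/
lemma rigid_scalar {v : Fin p → (Fin n → ℝ)} (hv : GoodCone v)
    (hnd : ¬ Decomposable v) (hp : 0 < p) (B : Matrix (Fin n) (Fin n) ℝ)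
    (d : Fin p → ℝ) (hd : ∀ i, 0 < d i) (hB : ∀ i, B *ᵥ v i = d i • v i) :
    ∃ t : ℝ, 0 < t ∧ B = t • 1 := by
  obtain ⟨hfull, hpt, hext, hdis⟩ := hv
  set i0 : Fin p := ⟨0, hp⟩ with hi0
  refine ⟨d i0, hd i0, ?_⟩
  set f := B.mulVecLin with hf
  have hmem : ∀ k, v k ∈ Module.End.eigenspace f (d k) := fun k => by
    rw [Module.End.mem_eigenspace_iff]
    show B *ᵥ v k = d k • v k
    exact hB k
  have hconst : ∀ i, d i = d i0 := by
    by_contra h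
    push_neg at h
    obtain ⟨j, hj⟩ := h
    apply hnd
    refine ⟨Module.End.eigenspace f (d i0),
      Submodule.span ℝ {x | ∃ k, d k ≠ d i0 ∧ x = v k}, ?_, ?_, ?_, ?_⟩
    · intro hbot
      have : v i0 ∈ (⊥ : Submodule ℝ (Fin n → ℝ)) := hbot ▸ hmem i0
      exact (hext i0).1 (Submodule.mem_bot ℝ |>.mp this)
    · intro hbot
      have : v j ∈ (⊥ : Submodule ℝ (Fin n → ℝ)) :=
        hbot ▸ Submodule.subset_span ⟨j, hj, rfl⟩
      exact (hext j).1 (Submodule.mem_bot ℝ |>.mp this)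
    · constructor
      · -- disjoint
        have hle : Submodule.span ℝ {x | ∃ k, d k ≠ d i0 ∧ x = v k} ≤
            ⨆ (μ : ℝ) (_ : μ ≠ d i0), Module.End.eigenspace f μ := by
          rw [Submodule.span_le]
          rintro x ⟨k, hk, rfl⟩
          exact Submodule.mem_iSup_of_mem (d k) (Submodule.mem_iSup_of_mem hk (hmem k))
        exact (Module.End.eigenspaces_iSupIndep f (d i0)).mono_right hle
      · -- codisjoint
        rw [codisjoint_iff, ← top_le_iff, ← hfull, Submodule.span_le]
        rintro x ⟨k, rfl⟩
        by_cases hk : d k = d i0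
        · exact Submodule.mem_sup_left (hk ▸ hmem k)
        · exact Submodule.mem_sup_right (Submodule.subset_span ⟨k, hk, rfl⟩)
    · intro i
      by_cases hk : d i = d i0
      · exact Or.inl (hk ▸ hmem i)
      · exact Or.inr (Submodule.subset_span ⟨i, hk, rfl⟩)
  -- now B acts as d i0 on a spanning set
  have hker : ∀ x : Fin n → ℝ, B *ᵥ x = d i0 • x := by
    have hle : Submodule.span ℝ (Set.range v) ≤
        LinearMap.ker (f - d i0 • LinearMap.id) := by
      rw [Submodule.span_le]
      rintro x ⟨k, rfl⟩
      simp only [SetLike.mem_coe, LinearMap.mem_ker, LinearMap.sub_apply,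
        LinearMap.smul_apply, LinearMap.id_apply]
      have : f (v k) = d k • v k := hB k
      rw [this, hconst k, sub_self]
    rw [hfull, top_le_iff] at hle
    intro x
    have hx : x ∈ LinearMap.ker (f - d i0 • LinearMap.id) := hle ▸ Submodule.mem_top
    simp only [LinearMap.mem_ker, LinearMap.sub_apply, LinearMap.smul_apply,
      LinearMap.id_apply, sub_eq_zero] at hx
    exact hx
  ext i k
  have h := congrFun (hker (Pi.single k 1)) i
  simp only [Matrix.mulVec_single, mul_one, Pi.smul_apply, Matrix.smul_apply,
    Matrix.one_apply, smul_eq_mul] at h ⊢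
  rw [Pi.single_apply] at h
  simpa [Matrix.col] using h

end Rigid

section Grp

lemma pow_eq_one_pos {t : ℝ} (ht : 0 < t) {m : ℕ} (hm : m ≠ 0) (h : t ^ m = 1) :
    t = 1 := by
  by_contra hne
  rcases lt_or_gt_of_ne hne with hlt | hgt
  · have := pow_lt_one₀ ht.le hlt hm; linarith
  · have := one_lt_pow₀ hgt hm; linarith

variable {v : Fin p → (Fin n → ℝ)} {σ τ : Equiv.Perm (Fin p)}

lemma mapsRays_smul {A : Matrix (Fin n) (Fin n) ℝ} (h : MapsRays A v σ) {s : ℝ}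
    (hs : 0 < s) : MapsRays (s • A) v σ := by
  intro i
  obtain ⟨c, hc, hce⟩ := h i
  exact ⟨s * c, mul_pos hs hc, by
    rw [Matrix.smul_mulVec, hce, smul_smul]⟩

lemma mapsRays_mul {A B : Matrix (Fin n) (Fin n) ℝ} (hA : MapsRays A v σ)
    (hB : MapsRays B v τ) : MapsRays (A * B) v (σ * τ) := by
  intro i
  obtain ⟨c, hc, hce⟩ := hB i
  obtain ⟨c', hc', hce'⟩ := hA (τ i)
  refine ⟨c * c', by positivity, ?_⟩
  rw [← Matrix.mulVec_mulVec, hce, Matrix.mulVec_smul, hce', Equiv.Perm.mul_apply,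
    smul_smul, mul_comm]

lemma mapsRays_one : MapsRays (1 : Matrix (Fin n) (Fin n) ℝ) v 1 := fun i =>
  ⟨1, one_pos, by rw [Matrix.one_mulVec, one_smul]; rfl⟩

lemma mapsRays_inv {A : Matrix (Fin n) (Fin n) ℝ} (hdet : IsUnit A.det)
    (hA : MapsRays A v σ) : MapsRays A⁻¹ v σ⁻¹ := by
  intro j
  obtain ⟨c, hc, hce⟩ := hA (σ⁻¹ j)
  rw [show σ (σ⁻¹ j) = j from σ.apply_symm_apply j] at hce
  refine ⟨c⁻¹, by positivity, ?_⟩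
  have h1 : A⁻¹ *ᵥ (A *ᵥ v (σ⁻¹ j)) = v (σ⁻¹ j) := by
    rw [Matrix.mulVec_mulVec, Matrix.nonsing_inv_mul A hdet, Matrix.one_mulVec]
  rw [hce, Matrix.mulVec_smul] at h1
  rw [← h1, smul_smul, inv_mul_cancel₀ hc.ne', one_smul]

lemma projSym_one : ProjSym v 1 := ⟨1, preservesCone_one, mapsRays_one⟩

lemma projSym_mul (hσ : ProjSym v σ) (hτ : ProjSym v τ) : ProjSym v (σ * τ) := by
  obtain ⟨A, hA, hmA⟩ := hσ
  obtain ⟨B, hB, hmB⟩ := hτ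
  exact ⟨A * B, preservesCone_mul hA hB, mapsRays_mul hmA hmB⟩

lemma projSym_inv (hσ : ProjSym v σ) : ProjSym v σ⁻¹ := by
  obtain ⟨A, hA, hmA⟩ := hσ
  exact ⟨A⁻¹, preservesCone_inv hA, mapsRays_inv hA.1 hmA⟩

lemma projSym_pow (hσ : ProjSym v σ) : ∀ k : ℕ, ProjSym v (σ ^ k) := by
  intro k
  induction k with
  | zero => simpa using projSym_one
  | succ k ih => rw [pow_succ]; exact projSym_mul ih hσ

/-- Uniqueness up to a positive scalar of the matrix realizing a ray permutation. -/
lemma unique_upto_scalar (hv : GoodCone v) (hnd : ¬ Decomposable v) (hp : 0 < p)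
    {A A' : Matrix (Fin n) (Fin n) ℝ} (hdA : IsUnit A.det)
    (h1 : MapsRays A v σ) (h2 : MapsRays A' v σ) :
    ∃ t : ℝ, 0 < t ∧ A' = t • A := by
  have key : ∀ i, ∃ e : ℝ, 0 < e ∧ (A⁻¹ * A') *ᵥ v i = e • v i := by
    intro i
    obtain ⟨c, hc, hce⟩ := h1 i
    obtain ⟨c', hc', hce'⟩ := h2 i
    have hinv : A⁻¹ *ᵥ v (σ i) = c⁻¹ • v i := by
      have h1' : A⁻¹ *ᵥ (A *ᵥ v i) = v i := by
        rw [Matrix.mulVec_mulVec, Matrix.nonsing_inv_mul A hdA, Matrix.one_mulVec]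
      rw [hce, Matrix.mulVec_smul] at h1'
      rw [← h1', smul_smul, inv_mul_cancel₀ hc.ne', one_smul]
    refine ⟨c' * c⁻¹, by positivity, ?_⟩
    rw [← Matrix.mulVec_mulVec, hce', Matrix.mulVec_smul, hinv, smul_smul]
  choose e he hee using key
  obtain ⟨t, ht, hB⟩ := rigid_scalar hv hnd hp (A⁻¹ * A') e he hee
  refine ⟨t, ht, ?_⟩
  have : A * (A⁻¹ * A') = A' := by
    rw [← Matrix.mul_assoc, Matrix.mul_nonsing_inv A hdA, Matrix.one_mul]
  rw [← this, hB, Matrix.mul_smul, Matrix.mul_one]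

end Grp

section Nmat

open Classical in
/-- The normalized (|det| = 1) matrix realizing a projective symmetry. -/
noncomputable def Nmat (v : Fin p → (Fin n → ℝ)) (σ : Equiv.Perm (Fin p)) :
    Matrix (Fin n) (Fin n) ℝ :=
  if h : ProjSym v σ then
    (|(Classical.choose h).det| ^ (-(1 / (n : ℝ))) : ℝ) • Classical.choose h
  else 1

variable {v : Fin p → (Fin n → ℝ)} {σ τ : Equiv.Perm (Fin p)}

lemma Nmat_spec (h : ProjSym v σ) :
    PreservesCone (Nmat v σ) v ∧ MapsRays (Nmat v σ) v σ ∧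
      |(Nmat v σ).det| = |(Classical.choose h).det| ^ (-(1 / (n : ℝ)) * n + 1) := by
  have hspec := Classical.choose_spec h
  set A := Classical.choose h with hA
  have hdet : A.det ≠ 0 := hspec.1.1.ne_zero
  have habs : (0:ℝ) < |A.det| := abs_pos.mpr hdet
  have hs : (0:ℝ) < |A.det| ^ (-(1 / (n : ℝ))) := Real.rpow_pos_of_pos habs _
  rw [Nmat, dif_pos h, ← hA]
  refine ⟨preservesCone_smul hspec.1 hs, mapsRays_smul hspec.2 hs, ?_⟩
  rw [Matrix.det_smul, abs_mul, abs_pow, abs_of_pos hs, Fintype.card_fin,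
    ← Real.rpow_natCast (|A.det| ^ (-(1 / (n : ℝ)))) n, ← Real.rpow_mul habs.le,
    Real.rpow_add habs, Real.rpow_one]

lemma Nmat_preserves (h : ProjSym v σ) : PreservesCone (Nmat v σ) v := (Nmat_spec h).1

lemma Nmat_mapsRays (h : ProjSym v σ) : MapsRays (Nmat v σ) v σ := (Nmat_spec h).2.1

lemma Nmat_absdet (hn : 0 < n) (h : ProjSym v σ) : |(Nmat v σ).det| = 1 := by
  rw [(Nmat_spec h).2.2]
  have : -(1 / (n : ℝ)) * n + 1 = 0 := by
    field_simp
    norm_num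
  rw [this, Real.rpow_zero]

lemma Nmat_isUnit (hn : 0 < n) (h : ProjSym v σ) : IsUnit (Nmat v σ).det := by
  rw [isUnit_iff_ne_zero]
  intro h0
  have := Nmat_absdet hn h
  rw [h0, abs_zero] at this
  norm_num at this

/-- Any ray-realizing matrix with |det| = 1 equals the normalized representative. -/
lemma Nmat_eq (hv : GoodCone v) (hnd : ¬ Decomposable v) (hp : 0 < p) (hn : 0 < n)
    (h : ProjSym v σ) {M : Matrix (Fin n) (Fin n) ℝ} (hM : MapsRays M v σ)
    (habs : |M.det| = 1) : M = Nmat v σ := by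
  obtain ⟨t, ht, rfl⟩ := unique_upto_scalar hv hnd hp (Nmat_isUnit hn h)
    (Nmat_mapsRays h) hM
  rw [Matrix.det_smul, abs_mul, abs_pow, abs_of_pos ht, Fintype.card_fin,
    Nmat_absdet hn h, mul_one] at habs
  rw [pow_eq_one_pos ht hn.ne' habs, one_smul]

lemma Nmat_one (hv : GoodCone v) (hnd : ¬ Decomposable v) (hp : 0 < p) (hn : 0 < n) :
    Nmat v 1 = 1 :=
  (Nmat_eq hv hnd hp hn projSym_one mapsRays_one (by simp)).symm

lemma Nmat_mul (hv : GoodCone v) (hnd : ¬ Decomposable v) (hp : 0 < p) (hn : 0 < n)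
    (hσ : ProjSym v σ) (hτ : ProjSym v τ) :
    Nmat v (σ * τ) = Nmat v σ * Nmat v τ := by
  refine (Nmat_eq hv hnd hp hn (projSym_mul hσ hτ)
    (mapsRays_mul (Nmat_mapsRays hσ) (Nmat_mapsRays hτ)) ?_).symm
  rw [Matrix.det_mul, abs_mul, Nmat_absdet hn hσ, Nmat_absdet hn hτ, mul_one]

lemma Nmat_pow (hv : GoodCone v) (hnd : ¬ Decomposable v) (hp : 0 < p) (hn : 0 < n)
    (hσ : ProjSym v σ) (k : ℕ) : Nmat v σ ^ k = Nmat v (σ ^ k) := by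
  induction k with
  | zero => rw [pow_zero, pow_zero, Nmat_one hv hnd hp hn]
  | succ k ih =>
      rw [pow_succ, pow_succ, Nmat_mul hv hnd hp hn (projSym_pow hσ k) hσ, ih]

lemma Nmat_orderOf (hv : GoodCone v) (hnd : ¬ Decomposable v) (hp : 0 < p) (hn : 0 < n)
    (hσ : ProjSym v σ) : Nmat v σ ^ orderOf σ = 1 := by
  rw [Nmat_pow hv hnd hp hn hσ, pow_orderOf_eq_one, Nmat_one hv hnd hp hn]

open Classical in
/-- The positive multiplier of `Nmat v σ` on the `i`-th ray. -/
noncomputable def Lfun (v : Fin p → (Fin n → ℝ)) (σ : Equiv.Perm (Fin p)) (i : Fin p) : ℝ :=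
  if h : ∃ c : ℝ, 0 < c ∧ Nmat v σ *ᵥ v i = c • v (σ i) then Classical.choose h else 1

lemma Lfun_spec (h : ProjSym v σ) (i : Fin p) :
    0 < Lfun v σ i ∧ Nmat v σ *ᵥ v i = Lfun v σ i • v (σ i) := by
  have hex := Nmat_mapsRays h i
  rw [Lfun, dif_pos hex]
  exact ⟨(Classical.choose_spec hex).1, (Classical.choose_spec hex).2⟩

lemma Lfun_cocycle (hv : GoodCone v) (hnd : ¬ Decomposable v) (hp : 0 < p) (hn : 0 < n)
    (hσ : ProjSym v σ) (hτ : ProjSym v τ) (i : Fin p) :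
    Lfun v (σ * τ) i = Lfun v σ (τ i) * Lfun v τ i := by
  have e1 := (Lfun_spec (projSym_mul hσ hτ) i).2
  have e2 : Nmat v (σ * τ) *ᵥ v i = (Lfun v σ (τ i) * Lfun v τ i) • v ((σ * τ) i) := by
    rw [Nmat_mul hv hnd hp hn hσ hτ, ← Matrix.mulVec_mulVec, (Lfun_spec hτ i).2,
      Matrix.mulVec_smul, (Lfun_spec hσ (τ i)).2, smul_smul, mul_comm,
      Equiv.Perm.mul_apply]
  exact smul_cancel_ne_zero (hv.2.2.1 ((σ * τ) i)).1 (e1.symm.trans e2)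

end Nmat

/-- For a non-decomposable cone there is a choice of generators w
(positive rescaling of v) for which every projective symmetry is realized exactly
by a finite-order element of GL(C); i.e. Lin_w(C) = Proj(C). -/
theorem stmt_12 (n p : ℕ) (v : Fin p → (Fin n → ℝ)) (hv : GoodCone v)
    (hnd : ¬ Decomposable v) :
    ∃ w : Fin p → (Fin n → ℝ), (∀ i, ∃ c : ℝ, 0 < c ∧ w i = c • v i) ∧
      ∀ σ : Equiv.Perm (Fin p),
        ProjSym v σ ↔ ∃ A : Matrix (Fin n) (Fin n) ℝ, PreservesCone A v ∧
          (∃ m : ℕ, 0 < m ∧ A ^ m = 1) ∧ ∀ i, A *ᵥ w i = w (σ i) := by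
  classical
  rcases Nat.eq_zero_or_pos p with hp | hp
  · -- degenerate case `p = 0`, hence `n = 0`
    subst hp
    have hn0 : n = 0 := by
      by_contra hn
      have hbot : (⊥ : Submodule ℝ (Fin n → ℝ)) = ⊤ := by
        have h : Submodule.span ℝ (Set.range v) = ⊤ := hv.1
        rwa [Set.range_eq_empty, Submodule.span_empty] at h
      have h1 : (fun _ => (1:ℝ) : Fin n → ℝ) ∈ (⊥ : Submodule ℝ (Fin n → ℝ)) := by
        rw [hbot]; trivial
      rw [Submodule.mem_bot] at h1
      have := congrFun h1 ⟨0, Nat.pos_of_ne_zero hn⟩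
      norm_num at this
    subst hn0
    refine ⟨v, fun i => i.elim0, fun σ => ?_⟩
    constructor
    · rintro ⟨A, hpres, -⟩
      refine ⟨A, hpres, ⟨1, one_pos, ?_⟩, fun i => i.elim0⟩
      rw [pow_one]
      ext i j
      exact i.elim0
    · rintro ⟨A, hpres, -, -⟩
      refine ⟨A, hpres, fun i => i.elim0⟩
  -- main case
  have hn : 0 < n := by
    by_contra hn
    have hn0 : n = 0 := Nat.eq_zero_of_not_pos hn
    subst hn0
    exact (hv.2.2.1 ⟨0, hp⟩).1 (funext fun j => j.elim0)
  set G : Finset (Equiv.Perm (Fin p)) :=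
    Finset.univ.filter (fun σ => ProjSym v σ) with hG
  have hGmem : ∀ σ, σ ∈ G ↔ ProjSym v σ := fun σ => by simp [hG]
  have hG1 : (1 : Equiv.Perm (Fin p)) ∈ G := (hGmem 1).mpr projSym_one
  have hNc : 0 < G.card := Finset.card_pos.mpr ⟨1, hG1⟩
  set P : Fin p → ℝ := fun i => ∏ τ ∈ G, Lfun v τ i with hP
  have hPpos : ∀ i, 0 < P i := fun i =>
    Finset.prod_pos fun τ hτ => (Lfun_spec ((hGmem τ).mp hτ) i).1
  set cc : Fin p → ℝ := fun i => P i ^ (-(1 / (G.card : ℝ))) with hcc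
  have hccpos : ∀ i, 0 < cc i := fun i => Real.rpow_pos_of_pos (hPpos i) _
  have hprod : ∀ σ, ProjSym v σ → ∀ i, P (σ i) * Lfun v σ i ^ G.card = P i := by
    intro σ hσ i
    have h1 : P (σ i) * Lfun v σ i ^ G.card
        = ∏ τ ∈ G, (Lfun v τ (σ i) * Lfun v σ i) := by
      rw [Finset.prod_mul_distrib, Finset.prod_const, hP]
    have h2 : ∀ τ ∈ G, Lfun v τ (σ i) * Lfun v σ i = Lfun v (τ * σ) i := fun τ hτ =>
      (Lfun_cocycle hv hnd hp hn ((hGmem τ).mp hτ) hσ i).symm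
    rw [h1, Finset.prod_congr rfl h2, hP]
    refine Finset.prod_bij' (fun τ _ => τ * σ) (fun ρ _ => ρ * σ⁻¹) ?_ ?_ ?_ ?_ ?_
    · intro τ hτ
      exact (hGmem _).mpr (projSym_mul ((hGmem τ).mp hτ) hσ)
    · intro ρ hρ
      exact (hGmem _).mpr (projSym_mul ((hGmem ρ).mp hρ) (projSym_inv hσ))
    · intro τ _; group
    · intro ρ _; group
    · intro τ _; rfl
  have key : ∀ σ, ProjSym v σ → ∀ i, cc (σ i) = cc i * Lfun v σ i := by
    intro σ hσ i
    have hb : 0 < Lfun v σ i := (Lfun_spec hσ i).1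
    have h1 : P (σ i) = P i * (Lfun v σ i ^ G.card)⁻¹ := by
      rw [eq_mul_inv_iff_mul_eq₀ (pow_ne_zero _ hb.ne')]
      exact hprod σ hσ i
    have hm : ((G.card : ℝ)) * (-(1 / (G.card : ℝ))) = -1 := by
      field_simp
    calc cc (σ i)
        = (P i * (Lfun v σ i ^ G.card)⁻¹) ^ (-(1 / (G.card : ℝ))) := by
          simp only [hcc]; rw [h1]
      _ = P i ^ (-(1 / (G.card : ℝ)))
            * ((Lfun v σ i ^ G.card)⁻¹) ^ (-(1 / (G.card : ℝ))) :=
          Real.mul_rpow (hPpos i).le (by positivity)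
      _ = cc i * Lfun v σ i := by
          rw [Real.inv_rpow (by positivity), ← Real.rpow_natCast (Lfun v σ i) G.card,
            ← Real.rpow_mul hb.le, hm, Real.rpow_neg_one, inv_inv]
  refine ⟨fun i => cc i • v i, fun i => ⟨cc i, hccpos i, rfl⟩, fun σ => ?_⟩
  constructor
  · intro hσ
    refine ⟨Nmat v σ, Nmat_preserves hσ,
      ⟨orderOf σ, orderOf_pos σ, Nmat_orderOf hv hnd hp hn hσ⟩, fun i => ?_⟩
    rw [Matrix.mulVec_smul, (Lfun_spec hσ i).2, smul_smul, ← key σ hσ i]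
  · rintro ⟨A, hpres, -, hAw⟩
    refine ⟨A, hpres, fun i => ⟨cc (σ i) / cc i, div_pos (hccpos _) (hccpos _), ?_⟩⟩
    have h2 := hAw i
    rw [Matrix.mulVec_smul] at h2
    have h3 := congrArg (fun y => (cc i)⁻¹ • y) h2
    simp only [smul_smul] at h3
    rw [inv_mul_cancel₀ (hccpos i).ne', one_smul] at h3
    rw [h3, div_eq_inv_mul]
end
end

section
/- Let C and C' be pointed full-dimensional polyhedral cones in ℝ^n generated by n+1 extreme rays each, with unique dependency coefficients having n_+ and n'_+ positive entries respectively (after all nonzero, up to overall sign choose n_+ ≤ n_−). Then C and C' are projectively equivalent if and only if {n_+, n_−} = {n'_+, n'_−}, assuming both are non-decomposable. -/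
open Matrix

noncomputable section

variable {n p : ℕ}

private lemma dep_unique {m : ℕ} (v : Fin (m + 1) → (Fin m → ℝ))
    (hv : Submodule.span ℝ (Set.range v) = ⊤)
    (α γ : Fin (m + 1) → ℝ) (hα : ∑ i, α i • v i = 0) (hγ : ∑ i, γ i • v i = 0)
    (hα0 : ∀ i, α i ≠ 0) : ∃ c : ℝ, γ = c • α := by
  classical
  set T : (Fin (m + 1) → ℝ) →ₗ[ℝ] (Fin m → ℝ) := Fintype.linearCombination ℝ v with hT
  have hrange : LinearMap.range T = ⊤ := by
    rw [hT, Fintype.range_linearCombination, hv]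
  have hker : Module.finrank ℝ (LinearMap.ker T) = 1 := by
    have h1 := LinearMap.finrank_range_add_finrank_ker T
    rw [hrange, finrank_top] at h1
    have h2 : Module.finrank ℝ (Fin m → ℝ) = m := by simp [Module.finrank_pi]
    have h3 : Module.finrank ℝ (Fin (m + 1) → ℝ) = m + 1 := by simp [Module.finrank_pi]
    omega
  have hαne : α ≠ 0 := fun h => hα0 0 (by rw [h]; rfl)
  have hαmem : α ∈ LinearMap.ker T := by
    rw [LinearMap.mem_ker, hT, Fintype.linearCombination_apply]; exact hα
  have hγmem : γ ∈ LinearMap.ker T := by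
    rw [LinearMap.mem_ker, hT, Fintype.linearCombination_apply]; exact hγ
  have hspan : Submodule.span ℝ {α} = LinearMap.ker T := by
    apply Submodule.eq_of_le_of_finrank_le
    · rwa [Submodule.span_le, Set.singleton_subset_iff]
    · rw [hker, finrank_span_singleton hαne]
  rw [← hspan] at hγmem
  obtain ⟨c, hc⟩ := Submodule.mem_span_singleton.mp hγmem
  exact ⟨c, hc.symm⟩

private lemma li_castSucc {m : ℕ} (v : Fin (m + 1) → (Fin m → ℝ))
    (hv : Submodule.span ℝ (Set.range v) = ⊤)
    (α : Fin (m + 1) → ℝ) (hα : ∑ i, α i • v i = 0) (hα0 : ∀ i, α i ≠ 0) :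
    LinearIndependent ℝ (fun i : Fin m => v i.castSucc) := by
  classical
  rw [Fintype.linearIndependent_iff]
  intro c hc
  set γ : Fin (m + 1) → ℝ := Fin.snoc c 0 with hγdef
  have hγ : ∑ i, γ i • v i = 0 := by
    rw [Fin.sum_univ_castSucc]
    simp only [hγdef, Fin.snoc_castSucc, Fin.snoc_last, zero_smul, add_zero]
    exact hc
  obtain ⟨d, hd⟩ := dep_unique v hv α γ hα hγ hα0
  have hlast : γ (Fin.last m) = d * α (Fin.last m) := by rw [hd]; rfl
  have hγlast : γ (Fin.last m) = 0 := by simp [hγdef]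
  have hd0 : d = 0 := by
    rcases mul_eq_zero.mp (hγlast ▸ hlast).symm with h | h
    · exact h
    · exact absurd h (hα0 _)
  intro i
  have h2 : γ i.castSucc = d * α i.castSucc := by rw [hd]; rfl
  simpa [hγdef, hd0] using h2

private lemma build_map {m : ℕ} (v w : Fin (m + 1) → (Fin m → ℝ))
    (hv : Submodule.span ℝ (Set.range v) = ⊤)
    (hw : Submodule.span ℝ (Set.range w) = ⊤)
    (α β : Fin (m + 1) → ℝ)
    (hα : ∑ i, α i • v i = 0) (hβ : ∑ i, β i • w i = 0)
    (hα0 : ∀ i, α i ≠ 0) (hβ0 : ∀ i, β i ≠ 0) (hm : 0 < m) :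
    ∃ A : (Fin m → ℝ) ≃ₗ[ℝ] (Fin m → ℝ), ∀ i, A (v i) = ((α i)⁻¹ * β i) • w i := by
  classical
  haveI : Nonempty (Fin m) := ⟨⟨0, hm⟩⟩
  set x : Fin (m + 1) → (Fin m → ℝ) := fun i => α i • v i with hxdef
  set y : Fin (m + 1) → (Fin m → ℝ) := fun i => β i • w i with hydef
  have key : ∀ (u : Fin (m + 1) → (Fin m → ℝ)) (δ : Fin (m + 1) → ℝ),
      Submodule.span ℝ (Set.range u) = ⊤ → (∀ i, δ i ≠ 0) →
      Submodule.span ℝ (Set.range (fun i => δ i • u i)) = ⊤ := by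
    intro u δ hu hδ
    rw [eq_top_iff, ← hu, Submodule.span_le]
    rintro _ ⟨i, rfl⟩
    have h : u i = (δ i)⁻¹ • ((fun i => δ i • u i) i) := by
      simp [smul_smul, inv_mul_cancel₀ (hδ i)]
    rw [h]
    exact Submodule.smul_mem _ _ (Submodule.subset_span ⟨i, rfl⟩)
  have hxs := key v α hv hα0
  have hys := key w β hw hβ0
  have hxd : ∑ i, (1 : ℝ) • x i = 0 := by simpa [hxdef] using hα
  have hyd : ∑ i, (1 : ℝ) • y i = 0 := by simpa [hydef] using hβ
  have hlix : LinearIndependent ℝ (fun i : Fin m => x i.castSucc) :=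
    li_castSucc x hxs (fun _ => 1) hxd (fun _ => one_ne_zero)
  have hliy : LinearIndependent ℝ (fun i : Fin m => y i.castSucc) :=
    li_castSucc y hys (fun _ => 1) hyd (fun _ => one_ne_zero)
  have hcard : Fintype.card (Fin m) = Module.finrank ℝ (Fin m → ℝ) := by
    simp [Module.finrank_pi]
  let b := basisOfLinearIndependentOfCardEqFinrank hlix hcard
  let b' := basisOfLinearIndependentOfCardEqFinrank hliy hcard
  have hb : ∀ i, b i = x i.castSucc := fun i => by
    simp [b, coe_basisOfLinearIndependentOfCardEqFinrank]
  have hb' : ∀ i, b' i = y i.castSucc := fun i => by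
    simp [b', coe_basisOfLinearIndependentOfCardEqFinrank]
  set A := b.equiv b' (Equiv.refl _) with hAdef
  have hAx : ∀ i : Fin m, A (x i.castSucc) = y i.castSucc := by
    intro i
    rw [← hb i, ← hb' i, hAdef, Module.Basis.equiv_apply, Equiv.refl_apply]
  have hall : ∀ j, A (x j) = y j := by
    intro j
    refine Fin.lastCases ?_ (fun i => hAx i) j
    have hsx : (∑ i : Fin m, x i.castSucc) + x (Fin.last m) = 0 := by
      have h := hxd
      simp only [one_smul] at h
      rwa [Fin.sum_univ_castSucc] at h
    have hsy : (∑ i : Fin m, y i.castSucc) + y (Fin.last m) = 0 := by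
      have h := hyd
      simp only [one_smul] at h
      rwa [Fin.sum_univ_castSucc] at h
    have hx' : x (Fin.last m) = -∑ i : Fin m, x i.castSucc :=
      eq_neg_of_add_eq_zero_right hsx
    have hy' : y (Fin.last m) = -∑ i : Fin m, y i.castSucc :=
      eq_neg_of_add_eq_zero_right hsy
    rw [hx', map_neg, map_sum]
    simp only [hAx]
    rw [hy']
  refine ⟨A, fun j => ?_⟩
  have hvj : v j = (α j)⁻¹ • x j := by
    simp [hxdef, smul_smul, inv_mul_cancel₀ (hα0 j)]
  rw [hvj, _root_.map_smul, hall j]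
  simp [hydef, smul_smul]

private lemma pos_ratio {a c : ℝ} (ha : a ≠ 0) (hc : c ≠ 0) (h : 0 < a ↔ 0 < c) :
    0 < a⁻¹ * c := by
  rcases lt_or_gt_of_ne ha with h1 | h1
  · have h2 : c < 0 := by
      rcases lt_or_gt_of_ne hc with h2 | h2
      · exact h2
      · exact absurd (h.mpr h2) (not_lt.mpr h1.le)
    exact mul_pos_of_neg_of_neg (inv_lt_zero.mpr h1) h2
  · exact mul_pos (inv_pos.mpr h1) (h.mp h1)

private lemma exists_sign_perm {m : ℕ} (α β : Fin (m + 1) → ℝ)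
    (h : (Finset.univ.filter fun i => 0 < α i).card
        = (Finset.univ.filter fun i => 0 < β i).card) :
    ∃ σ : Equiv.Perm (Fin (m + 1)), ∀ i, (0 < α i ↔ 0 < β (σ i)) := by
  classical
  have h1 : Fintype.card {i : Fin (m + 1) // 0 < α i}
      = Fintype.card {i : Fin (m + 1) // 0 < β i} := by
    simpa [Fintype.card_subtype] using h
  have h2 : Fintype.card {i : Fin (m + 1) // ¬ 0 < α i}
      = Fintype.card {i : Fin (m + 1) // ¬ 0 < β i} := by
    rw [Fintype.card_subtype_compl, Fintype.card_subtype_compl, h1]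
  let e1 := Fintype.equivOfCardEq h1
  let e2 := Fintype.equivOfCardEq h2
  refine ⟨(Equiv.sumCompl (fun i => 0 < α i)).symm.trans
    ((e1.sumCongr e2).trans (Equiv.sumCompl (fun i => 0 < β i))), fun i => ?_⟩
  by_cases hi : 0 < α i
  · have hσ : (Equiv.sumCompl (fun i => 0 < α i)).symm i = Sum.inl ⟨i, hi⟩ :=
      Equiv.sumCompl_symm_apply_of_pos (p := fun j => 0 < α j) (a := i) hi
    simp only [Equiv.trans_apply, hσ, Equiv.sumCongr_apply, Sum.map_inl,
      Equiv.sumCompl_apply_inl]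
    exact iff_of_true hi (e1 ⟨i, hi⟩).2
  · have hσ : (Equiv.sumCompl (fun i => 0 < α i)).symm i = Sum.inr ⟨i, hi⟩ :=
      Equiv.sumCompl_symm_apply_of_neg (p := fun j => 0 < α j) (a := i) hi
    simp only [Equiv.trans_apply, hσ, Equiv.sumCongr_apply, Sum.map_inr,
      Equiv.sumCompl_apply_inr]
    exact iff_of_false hi (e2 ⟨i, hi⟩).2

private lemma card_filter_perm {m : ℕ} (σ : Equiv.Perm (Fin m))
    (P Q : Fin m → Prop) [DecidablePred P] [DecidablePred Q]
    (h : ∀ i, P i ↔ Q (σ i)) :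
    (Finset.univ.filter P).card = (Finset.univ.filter Q).card := by
  classical
  have himg : Finset.univ.filter Q = (Finset.univ.filter P).image σ := by
    ext j
    simp only [Finset.mem_image, Finset.mem_filter, Finset.mem_univ, true_and]
    constructor
    · intro hj
      exact ⟨σ.symm j, (h _).mpr (by simpa using hj), by simp⟩
    · rintro ⟨i, hi, rfl⟩
      exact (h i).mp hi
  rw [himg, Finset.card_image_of_injective _ σ.injective]

/-- Two non-decomposable cones with n+1 extreme rays are projectively
equivalent iff the unordered pairs {n₊, n₋} of signs of their unique dependency
coefficients agree. -/
theorem stmt_14 (n : ℕ) (hn : 3 ≤ n) (v w : Fin (n + 1) → (Fin n → ℝ))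
    (hv : GoodCone v) (hw : GoodCone w)
    (hndv : ¬ Decomposable v) (hndw : ¬ Decomposable w)
    (α β : Fin (n + 1) → ℝ)
    (hα : ∑ i, α i • v i = 0) (hβ : ∑ i, β i • w i = 0)
    (hα0 : ∀ i, α i ≠ 0) (hβ0 : ∀ i, β i ≠ 0) :
    ProjEquiv v w ↔
      ({(Finset.univ.filter fun i => 0 < α i).card,
        (Finset.univ.filter fun i => α i < 0).card} : Finset ℕ) =
      {(Finset.univ.filter fun i => 0 < β i).card,
        (Finset.univ.filter fun i => β i < 0).card} := by
  classical
  constructor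
  · rintro ⟨A, σ, lam, hlam, hA⟩
    set γ : Fin (n + 1) → ℝ := fun j => α (σ.symm j) * lam (σ.symm j) with hγdef
    have hγσ : ∀ i, γ (σ i) = α i * lam i := fun i => by simp [hγdef]
    have hγw : ∑ j, γ j • w j = 0 := by
      have h0 : A (∑ i, α i • v i) = 0 := by rw [hα]; exact map_zero A
      rw [map_sum] at h0
      simp only [_root_.map_smul, hA, smul_smul] at h0
      calc ∑ j, γ j • w j = ∑ i, γ (σ i) • w (σ i) :=
            (Equiv.sum_comp σ (fun j => γ j • w j)).symm
        _ = 0 := by simp only [hγσ]; exact h0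
    have hγ0 : ∀ j, γ j ≠ 0 := fun j => mul_ne_zero (hα0 _) (ne_of_gt (hlam _))
    obtain ⟨c, hc⟩ := dep_unique w hw.1 β γ hβ hγw hβ0
    have hγβ : ∀ j, γ j = c * β j := fun j => by rw [hc]; rfl
    have hc0 : c ≠ 0 := by
      intro h
      exact hγ0 0 (by rw [hγβ 0, h, zero_mul])
    have hsP : ∀ i, 0 < α i ↔ 0 < γ (σ i) := by
      intro i; rw [hγσ]
      exact (mul_pos_iff_of_pos_right (hlam i)).symm
    have hsN : ∀ i, α i < 0 ↔ γ (σ i) < 0 := by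
      intro i; rw [hγσ]
      constructor
      · intro h; exact mul_neg_of_neg_of_pos h (hlam i)
      · intro h; by_contra h'
        exact absurd h (not_lt.mpr (mul_nonneg (not_lt.mp h') (hlam i).le))
    have hcp := card_filter_perm σ (fun i => 0 < α i) (fun j => 0 < γ j) hsP
    have hcn := card_filter_perm σ (fun i => α i < 0) (fun j => γ j < 0) hsN
    rcases lt_or_gt_of_ne hc0 with hcneg | hcpos
    · have e1 : (Finset.univ.filter fun j => 0 < γ j)
          = (Finset.univ.filter fun j => β j < 0) := by
        apply Finset.filter_congr
        intro j _
        rw [hγβ]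
        constructor
        · intro h; by_contra h'
          nlinarith [not_lt.mp h']
        · intro h; exact mul_pos_of_neg_of_neg hcneg h
      have e2 : (Finset.univ.filter fun j => γ j < 0)
          = (Finset.univ.filter fun j => 0 < β j) := by
        apply Finset.filter_congr
        intro j _
        rw [hγβ]
        constructor
        · intro h; by_contra h'
          nlinarith [not_lt.mp h']
        · intro h; exact mul_neg_of_neg_of_pos hcneg h
      have c1 : (Finset.univ.filter fun i => 0 < α i).card
          = (Finset.univ.filter fun j => β j < 0).card := by rw [hcp, e1]
      have c2 : (Finset.univ.filter fun i => α i < 0).card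
          = (Finset.univ.filter fun j => 0 < β j).card := by rw [hcn, e2]
      rw [c1, c2, Finset.pair_comm]
    · have e1 : (Finset.univ.filter fun j => 0 < γ j)
          = (Finset.univ.filter fun j => 0 < β j) := by
        apply Finset.filter_congr
        intro j _
        rw [hγβ]
        constructor
        · intro h; by_contra h'
          nlinarith [not_lt.mp h']
        · intro h; exact mul_pos hcpos h
      have e2 : (Finset.univ.filter fun j => γ j < 0)
          = (Finset.univ.filter fun j => β j < 0) := by
        apply Finset.filter_congr
        intro j _
        rw [hγβ]
        constructor
        · intro h; by_contra h'
          nlinarith [not_lt.mp h']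
        · intro h; exact mul_neg_of_pos_of_neg hcpos h
      rw [hcp, hcn, e1, e2]
  · intro h
    have hmem : (Finset.univ.filter fun i => 0 < β i).card ∈
        ({(Finset.univ.filter fun i => 0 < α i).card,
          (Finset.univ.filter fun i => α i < 0).card} : Finset ℕ) := by
      rw [h]; exact Finset.mem_insert_self _ _
    rw [Finset.mem_insert, Finset.mem_singleton] at hmem
    rcases hmem with hcase | hcase
    · obtain ⟨σ, hσ⟩ := exists_sign_perm α β hcase.symm
      have hwσ : Submodule.span ℝ (Set.range (fun i => w (σ i))) = ⊤ := by
        have hr : Set.range (fun i => w (σ i)) = Set.range w :=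
          σ.surjective.range_comp w
        rw [hr]; exact hw.1
      have hβσ : ∑ i, β (σ i) • w (σ i) = 0 := by
        rw [Equiv.sum_comp σ (fun j => β j • w j)]; exact hβ
      obtain ⟨A, hA⟩ := build_map v (fun i => w (σ i)) hv.1 hwσ α (fun i => β (σ i))
        hα hβσ hα0 (fun i => hβ0 _) (by omega)
      exact ⟨A, σ, fun i => (α i)⁻¹ * β (σ i),
        fun i => pos_ratio (hα0 i) (hβ0 _) (hσ i), hA⟩
    · set α' : Fin (n + 1) → ℝ := fun i => -α i with hα'def
      have hα'0 : ∀ i, α' i ≠ 0 := fun i => neg_ne_zero.mpr (hα0 i)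
      have hα' : ∑ i, α' i • v i = 0 := by
        simp only [hα'def, neg_smul]
        rw [Finset.sum_neg_distrib, hα, neg_zero]
      have hfe : (Finset.univ.filter fun i => 0 < α' i)
          = (Finset.univ.filter fun i => α i < 0) := by
        apply Finset.filter_congr
        intro i _
        simp [hα'def, neg_pos]
      have hcase' : (Finset.univ.filter fun i => 0 < α' i).card
          = (Finset.univ.filter fun i => 0 < β i).card := by
        rw [hfe, ← hcase]
      obtain ⟨σ, hσ⟩ := exists_sign_perm α' β hcase'
      have hwσ : Submodule.span ℝ (Set.range (fun i => w (σ i))) = ⊤ := by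
        have hr : Set.range (fun i => w (σ i)) = Set.range w :=
          σ.surjective.range_comp w
        rw [hr]; exact hw.1
      have hβσ : ∑ i, β (σ i) • w (σ i) = 0 := by
        rw [Equiv.sum_comp σ (fun j => β j • w j)]; exact hβ
      obtain ⟨A, hA⟩ := build_map v (fun i => w (σ i)) hv.1 hwσ α' (fun i => β (σ i))
        hα' hβσ hα'0 (fun i => hβ0 _) (by omega)
      exact ⟨A, σ, fun i => (α' i)⁻¹ * β (σ i),
        fun i => pos_ratio (hα'0 i) (hβ0 _) (hσ i), hA⟩
end
end

section
/- Let C be a pointed full-dimensional polyhedral cone in ℝ^n with extreme rays generated by v₁,…,v_p, and for positive multipliers α = (α₁,…,α_p) let Lin_{αv}(C) denote the group of permutations σ for which some A ∈ GL_n(ℝ) satisfies A(α_i v_i) = α_{σ(i)} v_{σ(i)}. If Lin_{αv}(C) acts transitively on {1,…,p}, then Lin_{αv}(C) = Proj(C). -/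
open Matrix

noncomputable section

variable {n p : ℕ}

namespace Stmt16

variable {n p : ℕ}

def Rl (w : Fin p → (Fin n → ℝ)) (σ : Equiv.Perm (Fin p)) (d : Fin p → ℝ) : Prop :=
  ∃ A : Matrix (Fin n) (Fin n) ℝ, IsUnit A.det ∧ ∀ i, A *ᵥ w i = d i • w (σ i)

def Fset (w : Fin p → (Fin n → ℝ)) : Set (Fin p → ℝ) :=
  {x | ∃ A : Matrix (Fin n) (Fin n) ℝ, IsUnit A.det ∧ ∀ i, A *ᵥ w i = Real.exp (x i) • w i}

theorem aeval_mulVec (A : Matrix (Fin n) (Fin n) ℝ) (x : Fin n → ℝ) (μ : ℝ)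
    (h : A *ᵥ x = μ • x) (q : Polynomial ℝ) :
    (Polynomial.aeval A q) *ᵥ x = q.eval μ • x := by
  induction q using Polynomial.induction_on with
  | C a =>
      simp [Polynomial.aeval_C, Algebra.algebraMap_eq_smul_one, smul_mulVec,
        one_mulVec]
  | add q r hq hr =>
      simp [map_add, add_mulVec, hq, hr, add_smul]
  | monomial k a hk =>
      have : Polynomial.aeval A (Polynomial.C a * Polynomial.X ^ (k + 1))
          = Polynomial.aeval A (Polynomial.C a * Polynomial.X ^ k) * A := by
        simp [pow_succ, mul_assoc]
      rw [this, ← mulVec_mulVec, h, mulVec_smul, hk]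
      simp [smul_smul, pow_succ]
      ring_nf

/-- A matrix whose `mulVec` hits a nonzero multiple of every `w i` is invertible,
provided the `w i` span. -/
theorem isUnit_of_eigen (hw : Submodule.span ℝ (Set.range w) = ⊤)
    (B : Matrix (Fin n) (Fin n) ℝ) (c : Fin p → ℝ) (hc : ∀ i, c i ≠ 0)
    (h : ∀ i, B *ᵥ w i = c i • w i) : IsUnit B.det := by
  rw [← Matrix.isUnit_iff_isUnit_det, ← Matrix.mulVec_surjective_iff_isUnit]
  have hr : LinearMap.range B.mulVecLin = ⊤ := by
    rw [eq_top_iff, ← hw, Submodule.span_le]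
    rintro _ ⟨i, rfl⟩
    refine ⟨(c i)⁻¹ • w i, ?_⟩
    simp [Matrix.mulVecLin, mulVec_smul, h i, smul_smul, inv_mul_cancel₀ (hc i)]
  intro y
  have : y ∈ LinearMap.range B.mulVecLin := by rw [hr]; trivial
  obtain ⟨x, hx⟩ := this
  exact ⟨x, hx⟩

theorem interp_eval {p : ℕ} (e : Fin p → ℝ) (r : ℝ → ℝ) (i : Fin p) :
    Polynomial.eval (e i)
      (Lagrange.interpolate (Finset.univ.image e) id r) = r (e i) := by
  have h := Lagrange.eval_interpolate_at_node (s := Finset.univ.image e) (v := id)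
    (r := r) (i := e i) (Set.injOn_id _)
    (Finset.mem_image_of_mem _ (Finset.mem_univ i))
  simpa using h

variable {w : Fin p → (Fin n → ℝ)}

/-- Fset is closed under real scaling. -/
theorem Fset.smul (hw : Submodule.span ℝ (Set.range w) = ⊤) {x : Fin p → ℝ}
    (hx : x ∈ Fset w) (t : ℝ) : t • x ∈ Fset w := by
  obtain ⟨A, hA, hAw⟩ := hx
  classical
  have heval : ∀ i, Polynomial.eval (Real.exp (x i))
      (Lagrange.interpolate (Finset.univ.image (fun j => Real.exp (x j))) id
        (fun node => Real.exp (t * Real.log node))) = Real.exp (t * x i) := by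
    intro i
    rw [interp_eval (fun j => Real.exp (x j)) (fun node => Real.exp (t * Real.log node)) i,
      Real.log_exp]
  refine ⟨Polynomial.aeval A
      (Lagrange.interpolate (Finset.univ.image (fun j => Real.exp (x j))) id
        (fun node => Real.exp (t * Real.log node))), ?_, ?_⟩
  · apply isUnit_of_eigen hw _ (fun i => Real.exp (t * x i))
      (fun i => (Real.exp_pos _).ne')
    intro i
    rw [aeval_mulVec A (w i) (Real.exp (x i)) (hAw i), heval i]
  · intro i
    rw [aeval_mulVec A (w i) (Real.exp (x i)) (hAw i), heval i]
    simp

theorem Fset.add {x y : Fin p → ℝ} (hx : x ∈ Fset w) (hy : y ∈ Fset w) :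
    x + y ∈ Fset w := by
  obtain ⟨A, hA, hAw⟩ := hx
  obtain ⟨B, hB, hBw⟩ := hy
  refine ⟨A * B, (Matrix.det_mul A B) ▸ (hA.mul hB), fun i => ?_⟩
  rw [← mulVec_mulVec, hBw i, mulVec_smul, hAw i]
  simp [smul_smul, ← Real.exp_add, add_comm]

theorem Fset.of_forall_eq (x : Fin p → ℝ) (h : ∀ i j, x i = x j) : x ∈ Fset w := by
  rcases isEmpty_or_nonempty (Fin p) with hp | hp
  · exact ⟨1, by simp, fun i => isEmptyElim i⟩
  · obtain ⟨i0⟩ := hp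
    refine ⟨Real.exp (x i0) • 1, ?_, fun i => ?_⟩
    · rw [Matrix.det_smul]
      simp [(Real.exp_pos _).ne']
    · rw [smul_mulVec, one_mulVec, h i i0]

theorem Fset.zero : (0 : Fin p → ℝ) ∈ Fset w :=
  Fset.of_forall_eq _ (fun _ _ => rfl)

theorem Fset.neg (hw : Submodule.span ℝ (Set.range w) = ⊤) {x : Fin p → ℝ}
    (hx : x ∈ Fset w) : -x ∈ Fset w := by
  have := Fset.smul hw hx (-1)
  simpa using this

theorem Fset.sum {ι : Type*} (s : Finset ι) (f : ι → (Fin p → ℝ))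
    (h : ∀ a ∈ s, f a ∈ Fset w) : (∑ a ∈ s, f a) ∈ Fset w := by
  classical
  induction s using Finset.induction_on with
  | empty => simpa using Fset.zero
  | insert _ _ hnotmem ih =>
      rename_i a s
      rw [Finset.sum_insert hnotmem]
      exact Fset.add (h a (Finset.mem_insert_self a s))
        (ih (fun b hb => h b (Finset.mem_insert_of_mem hb)))


/-- Composition of realizations. -/
theorem Rl.mul {σ σ' : Equiv.Perm (Fin p)} {d d' : Fin p → ℝ}
    (h : Rl w σ d) (h' : Rl w σ' d') :
    Rl w (σ * σ') (fun i => d' i * d (σ' i)) := by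
  obtain ⟨A, hA, hAw⟩ := h
  obtain ⟨B, hB, hBw⟩ := h'
  refine ⟨A * B, (Matrix.det_mul A B) ▸ (hA.mul hB), fun i => ?_⟩
  rw [← mulVec_mulVec, hBw i, mulVec_smul, hAw (σ' i), smul_smul]
  rfl

/-- If `A` realizes `σ` with scalings `d`, then `A⁻¹ *ᵥ w (σ i) = (d i)⁻¹ • w i`. -/
theorem inv_mulVec {σ : Equiv.Perm (Fin p)} {d : Fin p → ℝ}
    {A : Matrix (Fin n) (Fin n) ℝ} (hA : IsUnit A.det)
    (hAw : ∀ i, A *ᵥ w i = d i • w (σ i)) (hd : ∀ i, d i ≠ 0) (i : Fin p) :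
    A⁻¹ *ᵥ w (σ i) = (d i)⁻¹ • w i := by
  have h1 : A⁻¹ *ᵥ (A *ᵥ w i) = w i := by
    rw [mulVec_mulVec, Matrix.nonsing_inv_mul A hA, one_mulVec]
  rw [hAw i, mulVec_smul] at h1
  rw [← h1, smul_smul, inv_mul_cancel₀ (hd i), one_smul]

theorem Rl.inv {σ : Equiv.Perm (Fin p)} {d : Fin p → ℝ}
    (h : Rl w σ d) (hd : ∀ i, d i ≠ 0) :
    Rl w σ⁻¹ (fun j => (d (σ⁻¹ j))⁻¹) := by
  obtain ⟨A, hA, hAw⟩ := h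
  refine ⟨A⁻¹, Matrix.isUnit_nonsing_inv_det A hA, fun j => ?_⟩
  have := inv_mulVec hA hAw hd (σ⁻¹ j)
  rwa [← Equiv.Perm.mul_apply, mul_inv_cancel, Equiv.Perm.one_apply] at this

/-- Two realizations of the same permutation differ by an element of `Fset`. -/
theorem Rl.log_div_mem {σ : Equiv.Perm (Fin p)} {d d' : Fin p → ℝ}
    (h : Rl w σ d) (h' : Rl w σ d') (hd : ∀ i, 0 < d i) (hd' : ∀ i, 0 < d' i) :
    (fun i => Real.log (d i) - Real.log (d' i)) ∈ Fset w := by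
  obtain ⟨A, hA, hAw⟩ := h
  obtain ⟨B, hB, hBw⟩ := h'
  refine ⟨B⁻¹ * A, ?_, fun i => ?_⟩
  · rw [Matrix.det_mul]
    exact (Matrix.isUnit_nonsing_inv_det B hB).mul hA
  · rw [← mulVec_mulVec, hAw i, mulVec_smul,
      inv_mulVec hB hBw (fun i => (hd' i).ne') i, smul_smul,
      Real.exp_sub, Real.exp_log (hd i), Real.exp_log (hd' i)]
    rfl

/-- `Fset` is stable under precomposition with realizable permutations. -/
theorem Fset.comp {σ : Equiv.Perm (Fin p)} {d : Fin p → ℝ}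
    (h : Rl w σ d) (hd : ∀ i, 0 < d i) {x : Fin p → ℝ} (hx : x ∈ Fset w) :
    (fun i => x (σ i)) ∈ Fset w := by
  obtain ⟨A, hA, hAw⟩ := h
  obtain ⟨B, hB, hBw⟩ := hx
  refine ⟨A⁻¹ * (B * A), ?_, fun i => ?_⟩
  · rw [Matrix.det_mul, Matrix.det_mul]
    exact (Matrix.isUnit_nonsing_inv_det A hA).mul (hB.mul hA)
  · rw [← mulVec_mulVec, ← mulVec_mulVec, hAw i, mulVec_smul, hBw (σ i),
      mulVec_smul, mulVec_smul, inv_mulVec hA hAw (fun i => (hd i).ne') i,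
      smul_smul, smul_smul, mul_comm (d i), mul_assoc,
      mul_inv_cancel₀ (hd i).ne', mul_one]


theorem one_mem_Rl (w : Fin p → (Fin n → ℝ)) : Rl w 1 (fun _ => (1:ℝ)) :=
  ⟨1, by simp, fun i => by simp⟩

/-- The key theorem: if the exactly-realizable permutations act transitively,
then every realizable permutation is exactly realizable. -/
theorem key (w : Fin p → (Fin n → ℝ)) (hw : Submodule.span ℝ (Set.range w) = ⊤)
    (htrans : ∀ i j : Fin p, ∃ τ : Equiv.Perm (Fin p),
      Rl w τ (fun _ => (1:ℝ)) ∧ τ i = j)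
    {σ : Equiv.Perm (Fin p)} {d : Fin p → ℝ} (hd : ∀ i, 0 < d i)
    (hσ : Rl w σ d) : Rl w σ (fun _ => (1:ℝ)) := by
  classical
  -- the "projective" permutations
  set PPs : Set (Equiv.Perm (Fin p)) := {ρ | ∃ e : Fin p → ℝ, (∀ i, 0 < e i) ∧ Rl w ρ e}
    with hPPs
  have hmulP : ∀ ρ τ, ρ ∈ PPs → τ ∈ PPs → ρ * τ ∈ PPs := by
    rintro ρ τ ⟨e, he, hre⟩ ⟨f, hf, hrf⟩
    exact ⟨fun i => f i * e (τ i), fun i => mul_pos (hf i) (he (τ i)), hre.mul hrf⟩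
  have hinvP : ∀ ρ, ρ ∈ PPs → ρ⁻¹ ∈ PPs := by
    rintro ρ ⟨e, he, hre⟩
    exact ⟨fun j => (e (ρ⁻¹ j))⁻¹, fun j => inv_pos.2 (he _),
      hre.inv (fun i => (he i).ne')⟩
  have honeP : (1 : Equiv.Perm (Fin p)) ∈ PPs :=
    ⟨fun _ => 1, fun _ => one_pos, one_mem_Rl w⟩
  have hσP : σ ∈ PPs := ⟨d, hd, hσ⟩
  -- chosen scalings
  set dd : Equiv.Perm (Fin p) → (Fin p → ℝ) := fun ρ =>
    if h : ρ ∈ PPs then Classical.choose h else fun _ => 1 with hdd_def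
  have hdd : ∀ ρ ∈ PPs, (∀ i, 0 < dd ρ i) ∧ Rl w ρ (dd ρ) := by
    intro ρ hρ
    simp only [hdd_def, dif_pos hρ]
    exact Classical.choose_spec hρ
  set L : Equiv.Perm (Fin p) → (Fin p → ℝ) := fun ρ i => Real.log (dd ρ i) with hL_def
  -- the cocycle property
  have hcoc : ∀ ρ ∈ PPs, ∀ τ ∈ PPs,
      (L (ρ * τ) - (L τ + fun i => L ρ (τ i))) ∈ Fset w := by
    intro ρ hρ τ hτ
    have h1 := (hdd ρ hρ).2.mul (hdd τ hτ).2
    have h2 := hdd (ρ * τ) (hmulP ρ τ hρ hτ)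
    have h3 := Rl.log_div_mem h2.2 h1 h2.1
      (fun i => mul_pos ((hdd τ hτ).1 i) ((hdd ρ hρ).1 (τ i)))
    have heq : (fun i => Real.log (dd (ρ * τ) i)
          - Real.log (dd τ i * dd ρ (τ i)))
        = (L (ρ * τ) - (L τ + fun i => L ρ (τ i))) := by
      funext i
      rw [Real.log_mul ((hdd τ hτ).1 i).ne' ((hdd ρ hρ).1 (τ i)).ne']
      simp [hL_def, sub_sub]
    rw [← heq]
    exact h3
  -- finset versions
  set PP : Finset (Equiv.Perm (Fin p)) := Finset.univ.filter (· ∈ PPs) with hPP_def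
  have hmemPP : ∀ ρ, ρ ∈ PP ↔ ρ ∈ PPs := by
    intro ρ; simp [hPP_def]
  have hNpos : 0 < PP.card := Finset.card_pos.2 ⟨1, (hmemPP 1).2 honeP⟩
  set N : ℝ := (PP.card : ℝ) with hN_def
  have hNne : N ≠ 0 := by
    simp only [hN_def]
    exact_mod_cast hNpos.ne' 
  set T : Fin p → ℝ := ∑ ρ ∈ PP, L ρ with hT_def
  set β : Fin p → ℝ := N⁻¹ • T with hβ_def
  -- Step A
  have hstepA : ∀ τ ∈ PPs, (L τ + (fun i => β (τ i)) - β) ∈ Fset w := by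
    intro τ hτ
    have hsum : (∑ ρ ∈ PP, (L (ρ * τ) - (L τ + fun i => L ρ (τ i)))) ∈ Fset w :=
      Fset.sum PP _ (fun ρ hρ => hcoc ρ ((hmemPP ρ).1 hρ) τ hτ)
    have hre : (∑ ρ ∈ PP, L (ρ * τ)) = T := by
      rw [hT_def]
      refine Finset.sum_nbij' (fun ρ => ρ * τ) (fun ρ => ρ * τ⁻¹) ?_ ?_ ?_ ?_ ?_
      · intro ρ hρ
        exact (hmemPP _).2 (hmulP _ _ ((hmemPP ρ).1 hρ) hτ)
      · intro ρ hρ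
        exact (hmemPP _).2 (hmulP _ _ ((hmemPP ρ).1 hρ) (hinvP τ hτ))
      · intro ρ _; group
      · intro ρ _; group
      · intro ρ _; rfl
    have hsum2 : (∑ ρ ∈ PP, (L (ρ * τ) - (L τ + fun i => L ρ (τ i))))
        = T - (PP.card : ℝ) • (L τ) - fun i => T (τ i) := by
      funext i
      simp only [Finset.sum_apply, Pi.sub_apply, Pi.add_apply, Pi.smul_apply,
        smul_eq_mul]
      rw [Finset.sum_sub_distrib, Finset.sum_add_distrib]
      have h1 : (∑ ρ ∈ PP, L (ρ * τ) i) = T i := by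
        rw [← hre]; simp [Finset.sum_apply]
      have h2 : (∑ ρ ∈ PP, L ρ (τ i)) = T (τ i) := by
        simp [hT_def, Finset.sum_apply]
      rw [h1, h2, Finset.sum_const]
      simp only [nsmul_eq_mul, smul_eq_mul]
      ring
    rw [hsum2] at hsum
    have := Fset.smul hw hsum (-N⁻¹)
    have heq : (-N⁻¹) • (T - (PP.card : ℝ) • (L τ) - fun i => T (τ i))
        = L τ + (fun i => β (τ i)) - β := by
      funext i
      simp only [Pi.smul_apply, Pi.sub_apply, Pi.add_apply, smul_eq_mul,
        hβ_def, hN_def]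
      field_simp
      ring
    rwa [heq] at this
  -- Step B : exactly realizable permutations
  have hstepB : ∀ τ : Equiv.Perm (Fin p), Rl w τ (fun _ => (1:ℝ)) →
      (fun i => β (τ i)) - β ∈ Fset w := by
    intro τ hτ1
    have hτP : τ ∈ PPs := ⟨fun _ => 1, fun _ => one_pos, hτ1⟩
    have hLτ : L τ ∈ Fset w := by
      have := Rl.log_div_mem (hdd τ hτP).2 hτ1 (hdd τ hτP).1 (fun _ => one_pos)
      simpa [hL_def] using this
    have h1 := hstepA τ hτP
    have h2 := Fset.add (Fset.neg hw hLτ) h1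
    have heq : -L τ + (L τ + (fun i => β (τ i)) - β) = (fun i => β (τ i)) - β := by
      funext i
      simp only [Pi.add_apply, Pi.neg_apply, Pi.sub_apply]
      ring
    rwa [heq] at h2
  -- Step C : β ∈ Fset
  set GG : Finset (Equiv.Perm (Fin p)) :=
    Finset.univ.filter (fun τ => Rl w τ (fun _ => (1:ℝ))) with hGG_def
  have hmemGG : ∀ τ, τ ∈ GG ↔ Rl w τ (fun _ => (1:ℝ)) := by
    intro τ; simp [hGG_def]
  have hGmul : ∀ ρ τ, ρ ∈ GG → τ ∈ GG → ρ * τ ∈ GG := by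
    intro ρ τ hρ hτ
    have h2 := ((hmemGG ρ).1 hρ).mul ((hmemGG τ).1 hτ)
    rw [hmemGG]
    simpa using h2
  have hGinv : ∀ τ, τ ∈ GG → τ⁻¹ ∈ GG := by
    intro τ hτ
    have := ((hmemGG τ).1 hτ).inv (fun _ => one_ne_zero)
    rw [hmemGG]
    simpa using this
  have hMpos : 0 < GG.card :=
    Finset.card_pos.2 ⟨1, (hmemGG 1).2 (one_mem_Rl w)⟩
  have hconst : ∀ i j : Fin p, (∑ τ ∈ GG, β (τ i)) = ∑ τ ∈ GG, β (τ j) := by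
    intro i j
    obtain ⟨τ0, hτ0, hτ0ij⟩ := htrans i j
    have hτ0G : τ0 ∈ GG := (hmemGG τ0).2 hτ0
    refine (Finset.sum_nbij' (fun τ => τ * τ0) (fun τ => τ * τ0⁻¹) ?_ ?_ ?_ ?_ ?_).symm
    · intro τ hτ; exact hGmul _ _ hτ hτ0G
    · intro τ hτ; exact hGmul _ _ hτ (hGinv _ hτ0G)
    · intro τ _; group
    · intro τ _; group
    · intro τ _
      simp [Equiv.Perm.mul_apply, hτ0ij]
  have hCconst : (fun i => ∑ τ ∈ GG, β (τ i)) ∈ Fset w :=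
    Fset.of_forall_eq _ hconst
  have hSsum : (∑ τ ∈ GG, ((fun i => β (τ i)) - β)) ∈ Fset w :=
    Fset.sum GG _ (fun τ hτ => hstepB τ ((hmemGG τ).1 hτ))
  have hβF : β ∈ Fset w := by
    have hMβ : ((GG.card : ℝ)⁻¹) • ((fun i => ∑ τ ∈ GG, β (τ i))
        - (∑ τ ∈ GG, ((fun i => β (τ i)) - β))) = β := by
      funext i
      have hMne : (GG.card : ℝ) ≠ 0 := by exact_mod_cast hMpos.ne'
      simp only [Pi.smul_apply, Pi.sub_apply, Finset.sum_apply, smul_eq_mul]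
      rw [Finset.sum_sub_distrib, Finset.sum_const]
      field_simp
      rw [nsmul_eq_mul]; ring
    rw [← hMβ]
    exact Fset.smul hw (Fset.add hCconst (Fset.neg hw hSsum)) _
  -- Step D : L σ ∈ Fset
  have hβσ : (fun i => β (σ i)) ∈ Fset w := Fset.comp hσ hd hβF
  have hLσ : L σ ∈ Fset w := by
    have h1 := Fset.add (hstepA σ hσP) (Fset.add (Fset.neg hw hβσ) hβF)
    have heq : (L σ + (fun i => β (σ i)) - β) + (-(fun i => β (σ i)) + β) = L σ := by
      funext i
      simp only [Pi.add_apply, Pi.neg_apply, Pi.sub_apply]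
      ring
    rwa [heq] at h1
  -- Step E : conclude
  obtain ⟨B, hB, hBw⟩ := hLσ
  obtain ⟨A, hA, hAw⟩ := (hdd σ hσP).2
  have hBw' : ∀ i, B *ᵥ w i = dd σ i • w ((1 : Equiv.Perm (Fin p)) i) := by
    intro i
    rw [hBw i, hL_def, Real.exp_log ((hdd σ hσP).1 i)]
    simp
  refine ⟨A * B⁻¹, ?_, fun i => ?_⟩
  · rw [Matrix.det_mul]
    exact hA.mul (Matrix.isUnit_nonsing_inv_det B hB)
  · have hBinv := inv_mulVec hB hBw' (fun i => ((hdd σ hσP).1 i).ne') i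
    simp only [Equiv.Perm.one_apply] at hBinv
    rw [← mulVec_mulVec, hBinv, mulVec_smul, hAw i, smul_smul,
      inv_mul_cancel₀ ((hdd σ hσP).1 i).ne']


/-- A matrix mapping each generator to a nonnegative multiple of a generator
maps the cone into itself. -/
theorem mapsCone (v : Fin p → (Fin n → ℝ)) (B : Matrix (Fin n) (Fin n) ℝ)
    (ρ : Equiv.Perm (Fin p)) (e : Fin p → ℝ) (he : ∀ i, 0 ≤ e i)
    (hBv : ∀ i, B *ᵥ v i = e i • v (ρ i)) :
    ∀ x ∈ coneOf v, B *ᵥ x ∈ coneOf v := by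
  rintro x ⟨c, hc, rfl⟩
  refine ⟨fun j => c (ρ.symm j) * e (ρ.symm j),
    fun j => mul_nonneg (hc _) (he _), ?_⟩
  have h1 : B *ᵥ (∑ i, c i • v i) = ∑ i, c i • (B *ᵥ v i) := by
    rw [← Matrix.mulVecLin_apply, map_sum]
    simp [Matrix.mulVecLin_apply, mulVec_smul]
  rw [h1]
  have h2 : ∀ i, c i • (B *ᵥ v i)
      = (fun j => (c (ρ.symm j) * e (ρ.symm j)) • v j) (ρ i) := by
    intro i
    simp only [hBv i, Equiv.symm_apply_apply, smul_smul]
  rw [Finset.sum_congr rfl (fun i _ => h2 i)]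
  exact Fintype.sum_equiv ρ
    (fun i => (fun j => (c (ρ.symm j) * e (ρ.symm j)) • v j) (ρ i))
    (fun j => (c (ρ.symm j) * e (ρ.symm j)) • v j) (fun i => rfl)

end Stmt16

/-- If the linear symmetry group of the rescaled generators αᵢvᵢ acts
transitively on {1,…,p}, then it equals the projective symmetry group. -/
theorem stmt_16 (n p : ℕ) (v : Fin p → (Fin n → ℝ)) (hv : GoodCone v)
    (α : Fin p → ℝ) (hα : ∀ i, 0 < α i)
    (htrans : ∀ i j : Fin p, ∃ σ : Equiv.Perm (Fin p),
      (∃ A : Matrix (Fin n) (Fin n) ℝ, IsUnit A.det ∧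
        ∀ l, A *ᵥ (α l • v l) = α (σ l) • v (σ l)) ∧ σ i = j) :
    ∀ σ : Equiv.Perm (Fin p),
      (∃ A : Matrix (Fin n) (Fin n) ℝ, IsUnit A.det ∧
        ∀ l, A *ᵥ (α l • v l) = α (σ l) • v (σ l)) ↔ ProjSym v σ := by
    classical
  intro σ
  set w : Fin p → (Fin n → ℝ) := fun l => α l • v l with hw_def
  have hww : Submodule.span ℝ (Set.range w) = ⊤ := by
    rw [← hv.1]
    apply le_antisymm
    · rw [Submodule.span_le]
      rintro _ ⟨i, rfl⟩
      exact Submodule.smul_mem _ _ (Submodule.subset_span ⟨i, rfl⟩)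
    · rw [Submodule.span_le]
      rintro _ ⟨i, rfl⟩
      have hvi : v i = (α i)⁻¹ • w i := by
        rw [hw_def]
        simp [smul_smul, inv_mul_cancel₀ (hα i).ne']
      rw [hvi]
      exact Submodule.smul_mem _ _ (Submodule.subset_span ⟨i, rfl⟩)
  have htrans' : ∀ i j : Fin p, ∃ τ : Equiv.Perm (Fin p),
      Stmt16.Rl w τ (fun _ => (1:ℝ)) ∧ τ i = j := by
    intro i j
    obtain ⟨τ, ⟨A, hA, hAl⟩, hij⟩ := htrans i j
    exact ⟨τ, ⟨A, hA, fun l => by rw [hAl l]; simp [hw_def]⟩, hij⟩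
  constructor
  · -- forward direction
    rintro ⟨A, hA, hAl⟩
    have hAv : ∀ i, A *ᵥ v i = (α (σ i) / α i) • v (σ i) := by
      intro i
      have h1 : A *ᵥ (α i • v i) = α (σ i) • v (σ i) := hAl i
      rw [mulVec_smul] at h1
      have h2 := congrArg (fun z => (α i)⁻¹ • z) h1
      simp only [smul_smul, inv_mul_cancel₀ (hα i).ne', one_smul] at h2
      rw [h2, div_eq_inv_mul]
    have hepos : ∀ i, (0:ℝ) ≤ α (σ i) / α i := fun i => (div_pos (hα _) (hα _)).le
    have hAinv : ∀ j, A⁻¹ *ᵥ v j = (α (σ.symm j) / α j) • v (σ.symm j) := by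
      intro j
      have h3 := Stmt16.inv_mulVec (w := v) hA hAv
        (fun i => (div_pos (hα _) (hα _)).ne') (σ.symm j)
      rw [Equiv.apply_symm_apply] at h3
      rw [h3]
      congr 1
      rw [inv_div]
    refine ⟨A, ⟨hA, ?_⟩, fun i => ⟨α (σ i) / α i, div_pos (hα _) (hα _), hAv i⟩⟩
    ext y
    constructor
    · rintro ⟨x, hx, rfl⟩
      exact Stmt16.mapsCone v A σ _ hepos hAv x hx
    · intro hy
      refine ⟨A⁻¹ *ᵥ y, ?_, ?_⟩
      · exact Stmt16.mapsCone v A⁻¹ σ.symm _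
          (fun j => (div_pos (hα _) (hα _)).le) hAinv y hy
      · show A *ᵥ (A⁻¹ *ᵥ y) = y
        rw [mulVec_mulVec, Matrix.mul_nonsing_inv A hA, one_mulVec]
  · -- backward direction
    rintro ⟨A, ⟨hdet, _himg⟩, hrays⟩
    choose c hcpos hcv using hrays
    have hRl : Stmt16.Rl w σ (fun i => α i * c i / α (σ i)) := by
      refine ⟨A, hdet, fun i => ?_⟩
      rw [hw_def]
      simp only
      rw [mulVec_smul, hcv i, smul_smul, smul_smul]
      congr 1
      have hne : α (σ i) ≠ 0 := (hα (σ i)).ne'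
      field_simp
    have hpos : ∀ i, 0 < α i * c i / α (σ i) :=
      fun i => div_pos (mul_pos (hα i) (hcpos i)) (hα _)
    obtain ⟨A', hA', hA'l⟩ := Stmt16.key w hww htrans' hpos hRl
    refine ⟨A', hA', fun l => ?_⟩
    have := hA'l l
    rw [one_smul] at this
    exact this
end
end

section
/- Let C be a non-decomposable pointed full-dimensional polyhedral cone in ℝ^n with extreme ray generators v₁,…,v_p. For a permutation σ ∈ Sym(p), the set of vectors (α₁,…,α_p) ∈ ℝ^p satisfying the linear equations U_σ · diag(α₁,…,α_n) · U⁻¹ · V = V_σ · diag(α₁,…,α_p) — where V is the n×p matrix with columns v_i, V_σ is V with columns permuted by σ, and U, U_σ are the invertible first-n-column submatrices — is a linear subspace of dimension at most 1 if it contains a strictly positive vector. -/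
open Matrix

noncomputable section

variable {n p : ℕ}

/-- For a non-decomposable cone, the solution set of the linear system
U_σ · diag(α₁,…,α_n) · U⁻¹ · V = V_σ · diag(α₁,…,α_p) is a linear subspace which
has dimension at most 1 provided it contains a strictly positive vector. -/
theorem stmt_17 (n p : ℕ) (hnp : n ≤ p) (v : Fin p → (Fin n → ℝ))
    (hv : GoodCone v) (hnd : ¬ Decomposable v) (σ : Equiv.Perm (Fin p))
    (Vm Vσ : Matrix (Fin n) (Fin p) ℝ) (U Uσ : Matrix (Fin n) (Fin n) ℝ)
    (hVm : Vm = Matrix.of fun r i => v i r)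
    (hVσ : Vσ = Matrix.of fun r i => v (σ i) r)
    (hU : U = Matrix.of fun r s => v (Fin.castLE hnp s) r)
    (hUσ : Uσ = Matrix.of fun r s => v (σ (Fin.castLE hnp s)) r)
    (hUdet : IsUnit U.det)
    (S : Set (Fin p → ℝ))
    (hS : S = {α | Uσ * Matrix.diagonal (fun s => α (Fin.castLE hnp s)) * U⁻¹ * Vm =
      Vσ * Matrix.diagonal α})
    (hpos : ∃ α ∈ S, ∀ i, 0 < α i) :
    (∀ α ∈ S, ∀ β ∈ S, α + β ∈ S) ∧ (∀ (c : ℝ), ∀ α ∈ S, c • α ∈ S) ∧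
      ∃ α₀ : Fin p → ℝ, ∀ α ∈ S, ∃ c : ℝ, α = c • α₀ := by
  subst hS hVm hVσ hU hUσ
  -- columnwise form of membership
  have key : ∀ α : Fin p → ℝ,
      (Matrix.of fun r s => v (σ (Fin.castLE hnp s)) r) *
        Matrix.diagonal (fun s => α (Fin.castLE hnp s)) * (Matrix.of fun r s => v (Fin.castLE hnp s) r)⁻¹ *
        (Matrix.of fun r i => v i r) =
      (Matrix.of fun r i => v (σ i) r) * Matrix.diagonal α →
      ∀ i, ((Matrix.of fun r s => v (σ (Fin.castLE hnp s)) r) *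
        Matrix.diagonal (fun s => α (Fin.castLE hnp s)) *
        (Matrix.of fun r s => v (Fin.castLE hnp s) r)⁻¹) *ᵥ v i = α i • v (σ i) := by
    intro α hα i
    funext r
    have h := congrFun (congrFun hα r) i
    rw [Matrix.mul_apply, Matrix.mul_diagonal] at h
    simpa [Matrix.mulVec, dotProduct, mul_comm] using h
  refine ⟨?_, ?_, ?_⟩
  · intro α hα β hβ
    simp only [Set.mem_setOf_eq] at hα hβ ⊢
    have : Matrix.diagonal (fun s => (α + β) (Fin.castLE hnp s)) =
        Matrix.diagonal (fun s => α (Fin.castLE hnp s)) +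
        Matrix.diagonal (fun s => β (Fin.castLE hnp s)) := by
      rw [Matrix.diagonal_add]; rfl
    have h2 : Matrix.diagonal (α + β) = Matrix.diagonal α + Matrix.diagonal β := by
      rw [Matrix.diagonal_add]; rfl
    rw [this, h2, Matrix.mul_add, Matrix.add_mul, Matrix.add_mul, Matrix.mul_add, hα, hβ]
  · intro c α hα
    simp only [Set.mem_setOf_eq] at hα ⊢
    have : Matrix.diagonal (fun s => (c • α) (Fin.castLE hnp s)) =
        c • Matrix.diagonal (fun s => α (Fin.castLE hnp s)) := by
      rw [← Matrix.diagonal_smul]; rfl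
    have h2 : Matrix.diagonal (c • α) = c • Matrix.diagonal α := Matrix.diagonal_smul c α
    rw [this, h2, Matrix.mul_smul, Matrix.smul_mul, Matrix.smul_mul, Matrix.mul_smul, hα]
  · obtain ⟨β, hβS, hβpos⟩ := hpos
    refine ⟨β, ?_⟩
    intro α hα
    rcases Nat.eq_zero_or_pos p with hp | hp
    · exact ⟨0, funext fun i => absurd i.isLt (by omega)⟩
    have hβcol := key β hβS
    have hαcol := key α hα
    -- the linear map given by the matrix for β is bijective
    set B := (Matrix.of fun r s => v (σ (Fin.castLE hnp s)) r) *
        Matrix.diagonal (fun s => β (Fin.castLE hnp s)) *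
        (Matrix.of fun r s => v (Fin.castLE hnp s) r)⁻¹ with hB
    set A := (Matrix.of fun r s => v (σ (Fin.castLE hnp s)) r) *
        Matrix.diagonal (fun s => α (Fin.castLE hnp s)) *
        (Matrix.of fun r s => v (Fin.castLE hnp s) r)⁻¹ with hA
    have hspan : Submodule.span ℝ (Set.range v) = ⊤ := hv.1
    have hvne : ∀ i, v i ≠ 0 := fun i => (hv.2.2.1 i).1
    have hsurj : Function.Surjective B.mulVecLin := by
      rw [← LinearMap.range_eq_top]
      rw [← top_le_iff, ← hspan, Submodule.span_le]
      rintro _ ⟨j, rfl⟩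
      refine ⟨(β (σ.symm j))⁻¹ • v (σ.symm j), ?_⟩
      have := hβcol (σ.symm j)
      simp only [Matrix.mulVecLin_apply, Matrix.mulVec_smul, this, Equiv.apply_symm_apply]
      rw [smul_smul, inv_mul_cancel₀ (ne_of_gt (hβpos _)), one_smul]
    have hinj : Function.Injective B.mulVecLin :=
      LinearMap.injective_iff_surjective.mpr hsurj
    set e : (Fin n → ℝ) ≃ₗ[ℝ] (Fin n → ℝ) :=
      LinearEquiv.ofBijective B.mulVecLin ⟨hinj, hsurj⟩ with he
    set f : Module.End ℝ (Fin n → ℝ) := e.symm.toLinearMap ∘ₗ A.mulVecLin with hf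
    -- each v i is an eigenvector of f with eigenvalue t i
    set t : Fin p → ℝ := fun i => α i / β i with ht
    have heig : ∀ i, f (v i) = t i • v i := by
      intro i
      have h1 : e (t i • v i) = α i • v (σ i) := by
        have : e (t i • v i) = t i • (β i • v (σ i)) := by
          simp only [he, LinearEquiv.ofBijective_apply, _root_.map_smul, Matrix.mulVecLin_apply,
            hβcol i]
          exact congrArg (t i • ·) (hβcol i)
        rw [this, smul_smul, ht, div_mul_cancel₀ _ (ne_of_gt (hβpos i))]
      have : e.symm (α i • v (σ i)) = t i • v i := by
        rw [← h1, LinearEquiv.symm_apply_apply]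
      simpa [hf, hαcol i] using this
    obtain ⟨i₀⟩ : Nonempty (Fin p) := ⟨⟨0, hp⟩⟩
    set c := t i₀ with hc
    -- all eigenvalues are equal, else the cone is decomposable
    have hall : ∀ i, t i = c := by
      by_contra hne
      push_neg at hne
      obtain ⟨j, hj⟩ := hne
      set V₁ := Submodule.span ℝ {x | ∃ i, t i = c ∧ x = v i} with hV₁
      set V₂ := Submodule.span ℝ {x | ∃ i, t i ≠ c ∧ x = v i} with hV₂
      have hmem : ∀ i, v i ∈ V₁ ∨ v i ∈ V₂ := by
        intro i
        by_cases h : t i = c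
        · exact Or.inl (Submodule.subset_span ⟨i, h, rfl⟩)
        · exact Or.inr (Submodule.subset_span ⟨i, h, rfl⟩)
      have hV₁le : V₁ ≤ f.eigenspace c := by
        rw [hV₁, Submodule.span_le]
        rintro _ ⟨i, hi, rfl⟩
        rw [SetLike.mem_coe, Module.End.mem_eigenspace_iff, heig i, hi]
      have hV₂le : V₂ ≤ ⨆ (μ : ℝ) (_ : μ ≠ c), f.eigenspace μ := by
        rw [hV₂, Submodule.span_le]
        rintro _ ⟨i, hi, rfl⟩
        have : v i ∈ f.eigenspace (t i) := Module.End.mem_eigenspace_iff.mpr (heig i)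
        exact SetLike.mem_coe.mpr (Submodule.mem_iSup_of_mem (t i)
          (Submodule.mem_iSup_of_mem hi this))
      have hdisj : Disjoint V₁ V₂ :=
        ((f.eigenspaces_iSupIndep) c).mono hV₁le hV₂le
      have hcod : V₁ ⊔ V₂ = ⊤ := by
        rw [← top_le_iff, ← hspan, Submodule.span_le]
        rintro _ ⟨i, rfl⟩
        rcases hmem i with h | h
        · exact SetLike.mem_coe.mpr (Submodule.mem_sup_left h)
        · exact SetLike.mem_coe.mpr (Submodule.mem_sup_right h)
      refine hnd ⟨V₁, V₂, ?_, ?_, ⟨hdisj, codisjoint_iff.mpr hcod⟩, hmem⟩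
      · intro h
        exact hvne i₀ (Submodule.mem_bot ℝ |>.mp
          (h ▸ Submodule.subset_span ⟨i₀, rfl, rfl⟩))
      · intro h
        exact hvne j (Submodule.mem_bot ℝ |>.mp
          (h ▸ Submodule.subset_span ⟨j, hj, rfl⟩))
    refine ⟨c, funext fun i => ?_⟩
    have : α i = t i * β i := by
      rw [ht]
      exact (div_mul_cancel₀ _ (ne_of_gt (hβpos i))).symm
    rw [this, hall i]; rfl
end
end
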